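/- arXiv:2101.01704 — 2 statements merged into one kernel-verified Lean document; each statement's English description precedes it below -/
import Mathlib

section
/- Let C = {z ∈ X : Az = b} satisfy C ∩ int(dom φ) ≠ ∅, and for x ∈ int(dom φ) define the dual objective Ψ^x_C(λ) = φ*(∇φ(x) + A*λ) − φ*(∇φ(x)) − ⟨λ, b⟩ for λ ∈ Y. Let (x,λ) ∈ int(dom φ) × Y be such that ∇φ(x) + A*λ ∈ int(dom φ*). Then: (i) for every z ∈ C ∩ dom φ, Ψ^x_C(λ) = D_φ(z, ∇φ*(∇φ(x) + A*λ)) − D_φ(z, x); (ii) for every z ∈ C ∩ dom φ, D_φ(z, P_C(x)) ≤ D_φ(z, ∇φ*(∇φ(x) + A*λ)). -/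
open Set Filter Topology MeasureTheory ProbabilityTheory
open scoped InnerProductSpace ENNReal Classical

noncomputable section

/-- A Legendre function on a Euclidean space `X`, represented by its (finite) values `f` on its
effective domain `dom`, together with the data of its Fenchel conjugate (`conj` on `domConj`)
and the gradients of both. -/
structure LegendreFn (X : Type*) [NormedAddCommGroup X] [InnerProductSpace ℝ X]
    [FiniteDimensional ℝ X] where
  /-- the values of `φ` on its domain -/
  f : X → ℝ
  /-- the effective domain of `φ` (`φ = +∞` outside of it) -/
  dom : Set X
  /-- the values of the Fenchel conjugate `φ*` on its domain -/
  conj : X → ℝ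
  /-- the effective domain of `φ*` -/
  domConj : Set X
  /-- the gradient of `φ` (meaningful on `interior dom`) -/
  grad : X → X
  /-- the gradient of `φ*` (meaningful on `interior domConj`) -/
  gradConj : X → X
  dom_nonempty : dom.Nonempty
  int_dom_nonempty : (interior dom).Nonempty
  dom_convex : Convex ℝ dom
  convexOn : ConvexOn ℝ dom f
  /-- `φ` is closed: the epigraph of the extended function is closed -/
  closedEpi : IsClosed {p : X × ℝ | p.1 ∈ dom ∧ f p.1 ≤ p.2}
  /-- essential smoothness, part 1: differentiability on the interior of the domain -/
  hasGrad : ∀ x ∈ interior dom, HasGradientAt f (grad x) x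
  /-- essential smoothness, part 2: the gradient blows up at the boundary -/
  grad_blowup : ∀ (u : ℕ → X) (x : X), (∀ n, u n ∈ interior dom) → x ∈ frontier dom →
      Tendsto u atTop (nhds x) → Tendsto (fun n => ‖grad (u n)‖) atTop atTop
  /-- `domConj` is the set where the conjugate supremum is finite -/
  domConj_spec : ∀ y : X, y ∈ domConj ↔ BddAbove ((fun x => ⟪x, y⟫_ℝ - f x) '' dom)
  /-- `conj` is the Fenchel conjugate of `φ` -/
  conj_spec : ∀ y ∈ domConj, IsLUB ((fun x => ⟪x, y⟫_ℝ - f x) '' dom) (conj y)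
  int_domConj_nonempty : (interior domConj).Nonempty
  /-- essential strict convexity: `φ` is strictly convex on every convex subset of `dom ∂φ` -/
  strict : ∀ s : Set X,
      s ⊆ {x ∈ dom | ∃ v : X, ∀ z ∈ dom, f x + ⟪v, z - x⟫_ℝ ≤ f z} →
      Convex ℝ s → StrictConvexOn ℝ s f
  hasGradConj : ∀ y ∈ interior domConj, HasGradientAt conj (gradConj y) y
  /-- Bregman projections onto closed convex sets meeting `interior dom` exist
  (Bauschke–Borwein). -/
  proj_exists : ∀ S : Set X, IsClosed S → Convex ℝ S → (S ∩ interior dom).Nonempty →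
      ∀ x ∈ interior dom, ∃ p ∈ S ∩ interior dom, ∀ z ∈ S ∩ dom,
        f p - ⟪p, grad x⟫_ℝ ≤ f z - ⟪z, grad x⟫_ℝ

namespace LegendreFn

variable {X : Type*} [NormedAddCommGroup X] [InnerProductSpace ℝ X] [FiniteDimensional ℝ X]

/-- The Bregman distance `D_φ(x, y)`; the formula is meaningful for `x ∈ dom φ` and
`y ∈ int (dom φ)`. -/
def breg (L : LegendreFn X) (x y : X) : ℝ :=
  L.f x - L.f y - ⟪x - y, L.grad y⟫_ℝ

/-- The Bregman distance from the point `y` to the set `S`: `D_S(y) = inf_{z ∈ S} D_φ(z, y)`. -/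
def distTo (L : LegendreFn X) (S : Set X) (y : X) : ℝ :=
  sInf ((fun z => L.breg z y) '' (S ∩ L.dom))

/-- `p` is the Bregman projection of `x` onto `S`. -/
def IsBregProj (L : LegendreFn X) (S : Set X) (x p : X) : Prop :=
  p ∈ S ∧ p ∈ interior L.dom ∧ ∀ z ∈ S ∩ L.dom, L.breg p x ≤ L.breg z x

/-- The Bregman projection of `x` onto `S` (as a function; well defined whenever the Bregman
projection exists, since it is then unique). -/
def proj (L : LegendreFn X) (S : Set X) (x : X) : X :=
  @Classical.epsilon X ⟨0⟩ (L.IsBregProj S x)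

end LegendreFn

/-- Condition SC (sequential consistency). -/
def SCcond {X : Type*} [NormedAddCommGroup X] [InnerProductSpace ℝ X] [FiniteDimensional ℝ X]
    (L : LegendreFn X) : Prop :=
  ∀ z y : ℕ → X, (∀ n, z n ∈ interior L.dom) → (∀ n, y n ∈ interior L.dom) →
    Bornology.IsBounded (Set.range z) → Bornology.IsBounded (Set.range y) →
    Tendsto (fun n => L.breg (z n) (y n)) atTop (nhds 0) →
    Tendsto (fun n => z n - y n) atTop (nhds 0)

/-- Assumption H0: `C ≠ X`, `dom φ*` is open and `int (dom φ) ∩ C ≠ ∅`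
(`φ` being Legendre is part of the `LegendreFn` structure). -/
def H0 {X : Type*} [NormedAddCommGroup X] [InnerProductSpace ℝ X] [FiniteDimensional ℝ X]
    (L : LegendreFn X) (C : Set X) : Prop :=
  C ≠ Set.univ ∧ IsOpen L.domConj ∧ (interior L.dom ∩ C).Nonempty

/-- `G` is the Moore–Penrose pseudoinverse of `T`. -/
def IsMPInv {E F : Type*} [NormedAddCommGroup E] [InnerProductSpace ℝ E] [FiniteDimensional ℝ E]
    [NormedAddCommGroup F] [InnerProductSpace ℝ F] [FiniteDimensional ℝ F]
    (T : E →L[ℝ] F) (G : F →L[ℝ] E) : Prop :=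
  T ∘L G ∘L T = T ∧ G ∘L T ∘L G = G ∧
    ContinuousLinearMap.adjoint (T ∘L G) = T ∘L G ∧
    ContinuousLinearMap.adjoint (G ∘L T) = G ∘L T

/-- The orthogonal projection onto a subspace, as a map `X →L[ℝ] X`. -/
def projL {X : Type*} [NormedAddCommGroup X] [InnerProductSpace ℝ X] [FiniteDimensional ℝ X]
    (K : Submodule ℝ X) : X →L[ℝ] X :=
  K.subtypeL.comp (K.orthogonalProjectionOnto)

/-- The set `K(x)` of points having the same Bregman projection onto `C` as `x` and not larger
Bregman distance to `C`. -/
def Kset {X : Type*} [NormedAddCommGroup X] [InnerProductSpace ℝ X] [FiniteDimensional ℝ X]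
    (L : LegendreFn X) (C : Set X) (x : X) : Set X :=
  {z | z ∈ interior L.dom ∧ L.proj C z = L.proj C x ∧ L.distTo C z ≤ L.distTo C x}

section Affine

variable {X Y : Type*} [NormedAddCommGroup X] [InnerProductSpace ℝ X] [FiniteDimensional ℝ X]
  [NormedAddCommGroup Y] [InnerProductSpace ℝ Y] [FiniteDimensional ℝ Y]
  {I : Type*} {Yf : I → Type*} [∀ i, NormedAddCommGroup (Yf i)]
  [∀ i, InnerProductSpace ℝ (Yf i)] [∀ i, FiniteDimensional ℝ (Yf i)]

/-- Assumption H2₁: `φ*` is twice differentiable (with second derivative `hess`), and for all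
`x ∈ int (dom φ) ∩ C`, `A ∘ ∇²φ*(∇φ(x)) ≠ 0` and
`sup_i ‖Aᵢ* (Aᵢ ∇²φ*(∇φ(x)) Aᵢ*)† Aᵢ‖ < ∞`. -/
def H21 (L : LegendreFn X) (A : ∀ i, X →L[ℝ] Yf i) (AY : X →L[ℝ] Y) (C : Set X)
    (hess : X → X →L[ℝ] X) : Prop :=
  (∀ y ∈ interior L.domConj, HasFDerivAt L.gradConj (hess y) y) ∧
  ∀ x ∈ interior L.dom ∩ C,
    AY ∘L hess (L.grad x) ≠ 0 ∧
    ∃ M : ℝ, ∀ (i : I) (G : Yf i →L[ℝ] Yf i),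
      IsMPInv (A i ∘L hess (L.grad x) ∘L ContinuousLinearMap.adjoint (A i)) G →
      ‖ContinuousLinearMap.adjoint (A i) ∘L G ∘L A i‖ ≤ M

/-- The orthogonal projection `Q_i(x)` onto `range (H(x) Aᵢ*)`, where `H(x)` (here `Hrt x`) is
the positive square root of `∇²φ*(∇φ(x))`. -/
def Qproj (A : ∀ i, X →L[ℝ] Yf i) (Hrt : X → X →L[ℝ] X) (i : I) (x : X) : X →L[ℝ] X :=
  projL (LinearMap.range ((Hrt x ∘L ContinuousLinearMap.adjoint (A i) : Yf i →L[ℝ] X) : Yf i →ₗ[ℝ] X))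

/-- The subspace `V(x) = range (H(x) A*)`. -/
def Vsub (AY : X →L[ℝ] Y) (Hrt : X → X →L[ℝ] X) (x : X) : Submodule ℝ X :=
  LinearMap.range ((Hrt x ∘L ContinuousLinearMap.adjoint AY : Y →L[ℝ] X) : Y →ₗ[ℝ] X)

/-- `γ_𝒞(x) = inf_{v ∈ V(x) \ {0}} sup_i ‖Q_i(x) v‖² / ‖v‖²`. -/
def gammaC (A : ∀ i, X →L[ℝ] Yf i) (AY : X →L[ℝ] Y) (Hrt : X → X →L[ℝ] X) (x : X) : ℝ :=
  ⨅ v : {v : X // v ∈ Vsub AY Hrt x ∧ v ≠ 0},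
    ⨆ i : I, ‖Qproj A Hrt i x v.1‖ ^ 2 / ‖v.1‖ ^ 2

/-- `σ_𝒞(x)`, the (deterministic, greedy) contraction factor. -/
def sigmaC (L : LegendreFn X) (Cs : I → Set X) (C : Set X) (γ : X → ℝ) (x : X) : ℝ :=
  if x ∈ C then 1 - γ x
  else ⨆ z : ↥(Kset L C x \ C), ⨅ i : I, L.distTo C (L.proj (Cs i) z) / L.distTo C z

end Affine

section Stochastic

variable {X Y : Type*} [NormedAddCommGroup X] [InnerProductSpace ℝ X] [FiniteDimensional ℝ X]
  [NormedAddCommGroup Y] [InnerProductSpace ℝ Y] [FiniteDimensional ℝ Y]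
  {I : Type*} {Yf : I → Type*} [∀ i, NormedAddCommGroup (Yf i)]
  [∀ i, InnerProductSpace ℝ (Yf i)] [∀ i, FiniteDimensional ℝ (Yf i)]
  {Ω : Type*} [MeasurableSpace Ω]

/-- Assumption H2₂ (stochastic version of H2₁, with an essential supremum). -/
def H22 (L : LegendreFn X) (A : ∀ i, X →L[ℝ] Yf i) (AY : X →L[ℝ] Y) (C : Set X)
    (hess : X → X →L[ℝ] X) (P : Measure Ω) (ξ : Ω → I) : Prop :=
  (∀ y ∈ interior L.domConj, HasFDerivAt L.gradConj (hess y) y) ∧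
  ∀ x ∈ interior L.dom ∩ C,
    AY ∘L hess (L.grad x) ≠ 0 ∧
    ∃ M : ℝ, ∀ᵐ ω ∂P, ∀ G : Yf (ξ ω) →L[ℝ] Yf (ξ ω),
      IsMPInv (A (ξ ω) ∘L hess (L.grad x) ∘L ContinuousLinearMap.adjoint (A (ξ ω))) G →
      ‖ContinuousLinearMap.adjoint (A (ξ ω)) ∘L G ∘L A (ξ ω)‖ ≤ M

/-- `Q̄(x) = E[Q_ξ(x)]` (Bochner expectation). -/
def Qbar (A : ∀ i, X →L[ℝ] Yf i) (Hrt : X → X →L[ℝ] X) (P : Measure Ω) (ξ : Ω → I) (x : X) :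
    X →L[ℝ] X :=
  ∫ ω, Qproj A Hrt (ξ ω) x ∂P

/-- `γ_{𝒞,μ}(x) = inf_{v ∈ V(x) \ {0}} ⟪Q̄(x) v, v⟫ / ‖v‖²`. -/
def gammaCmu (A : ∀ i, X →L[ℝ] Yf i) (AY : X →L[ℝ] Y) (Hrt : X → X →L[ℝ] X)
    (P : Measure Ω) (ξ : Ω → I) (x : X) : ℝ :=
  ⨅ v : {v : X // v ∈ Vsub AY Hrt x ∧ v ≠ 0},
    ⟪Qbar A Hrt P ξ x v.1, v.1⟫_ℝ / ‖v.1‖ ^ 2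

/-- `σ_{𝒞,μ}(x)`, the stochastic contraction factor. -/
def sigmaCmu (L : LegendreFn X) (Cs : I → Set X) (C : Set X) (γ : X → ℝ)
    (P : Measure Ω) (ξ : Ω → I) (x : X) : ℝ :=
  if x ∈ C then 1 - γ x
  else ⨆ z : ↥(Kset L C x \ C),
    (∫ ω, L.distTo C (L.proj (Cs (ξ ω)) z) ∂P) / L.distTo C z

/-- `D̄_C(x) = E[D_{C_ξ}(x)]`. -/
def DbarFn (L : LegendreFn X) (Cs : I → Set X) (P : Measure Ω) (ξ : Ω → I) (x : X) : ℝ :=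
  ∫ ω, L.distTo (Cs (ξ ω)) x ∂P

end Stochastic

section Helpers

variable {X : Type*} [NormedAddCommGroup X] [InnerProductSpace ℝ X] [FiniteDimensional ℝ X]

private lemma deriv_le_of_slope {g : ℝ → ℝ} {d K c : ℝ} (hc : 0 < c) (hg : HasDerivAt g d 0)
    (h : ∀ t ∈ Set.Ioc (0:ℝ) c, (g t - g 0) / t ≤ K) : d ≤ K := by
  have h1 : Tendsto (slope g 0) (𝓝[>] (0:ℝ)) (𝓝 d) :=
    (hasDerivAt_iff_tendsto_slope.1 hg).mono_left
      (nhdsWithin_mono _ (fun t ht => ne_of_gt ht))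
  refine le_of_tendsto h1 ?_
  filter_upwards [Ioc_mem_nhdsGT hc] with t ht
  have : slope g 0 t = (g t - g 0) / t := by rw [slope_def_field]; rw [sub_zero]
  rw [this]; exact h t ht

private lemma le_deriv_of_slope {g : ℝ → ℝ} {d K c : ℝ} (hc : 0 < c) (hg : HasDerivAt g d 0)
    (h : ∀ t ∈ Set.Ioc (0:ℝ) c, K ≤ (g t - g 0) / t) : K ≤ d := by
  have h1 : Tendsto (slope g 0) (𝓝[>] (0:ℝ)) (𝓝 d) :=
    (hasDerivAt_iff_tendsto_slope.1 hg).mono_left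
      (nhdsWithin_mono _ (fun t ht => ne_of_gt ht))
  refine ge_of_tendsto h1 ?_
  filter_upwards [Ioc_mem_nhdsGT hc] with t ht
  have : slope g 0 t = (g t - g 0) / t := by rw [slope_def_field]; rw [sub_zero]
  rw [this]; exact h t ht

private lemma hasDerivAt_line {f : X → ℝ} {g x : X} (hf : HasGradientAt f g x) (v : X) :
    HasDerivAt (fun t : ℝ => f (x + t • v)) ⟪g, v⟫_ℝ 0 := by
  have hline : HasDerivAt (fun t : ℝ => x + t • v) v 0 := by
    simpa using ((hasDerivAt_id (0:ℝ)).smul_const v).const_add x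
  have hfd : HasFDerivAt f (InnerProductSpace.toDual ℝ X g) (x + (0:ℝ) • v) := by
    simpa using hf.hasFDerivAt
  exact (hfd.comp_hasDerivAt 0 hline).congr_deriv (by simp)

private lemma subgrad_unique {f : X → ℝ} {s : Set X} {u g x : X}
    (hx : x ∈ interior s) (hg : HasGradientAt f g x)
    (hsub : ∀ z ∈ s, f x + ⟪u, z - x⟫_ℝ ≤ f z) : u = g := by
  obtain ⟨δ, hδ, hball⟩ := Metric.isOpen_iff.1 isOpen_interior x hx
  have key : ∀ v : X, ⟪u, v⟫_ℝ ≤ ⟪g, v⟫_ℝ := by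
    intro v
    have hc : (0:ℝ) < δ / (‖v‖ + 1) := by positivity
    refine le_deriv_of_slope hc (hasDerivAt_line hg v) (fun t ht => ?_)
    have hmem : x + t • v ∈ s := by
      refine interior_subset (hball ?_)
      rw [Metric.mem_ball, dist_eq_norm]
      have : ‖x + t • v - x‖ = t * ‖v‖ := by
        simp [norm_smul, abs_of_pos ht.1]
      rw [this]
      calc t * ‖v‖ ≤ (δ / (‖v‖ + 1)) * ‖v‖ := by
            apply mul_le_mul_of_nonneg_right ht.2 (norm_nonneg v)
        _ < δ := by
            rw [div_mul_eq_mul_div, div_lt_iff₀ (by positivity)]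
            nlinarith [norm_nonneg v]
    have := hsub _ hmem
    rw [add_sub_cancel_left, real_inner_smul_right] at this
    rw [le_div_iff₀ ht.1]
    have h0 : x + (0:ℝ) • v = x := by simp
    rw [h0]
    linarith [this]
  have h2 : ⟪u - g, u - g⟫_ℝ ≤ 0 := by
    have := key (u - g)
    rw [inner_sub_left]
    linarith
  have := real_inner_self_nonpos.1 h2
  exact sub_eq_zero.1 this

end Helpers

namespace LegendreFn

variable {X : Type*} [NormedAddCommGroup X] [InnerProductSpace ℝ X] [FiniteDimensional ℝ X]
  (L : LegendreFn X)

lemma subgrad {x : X} (hx : x ∈ interior L.dom) {u : X} (hu : u ∈ L.dom) :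
    L.f x + ⟪L.grad x, u - x⟫_ℝ ≤ L.f u := by
  have hx' : x ∈ L.dom := interior_subset hx
  have hd := hasDerivAt_line (L.hasGrad x hx) (u - x)
  have key : ⟪L.grad x, u - x⟫_ℝ ≤ L.f u - L.f x := by
    refine deriv_le_of_slope one_pos hd (fun t ht => ?_)
    have heq : x + t • (u - x) = (1 - t) • x + t • u := by module
    have hcomb : L.f ((1 - t) • x + t • u) ≤ (1 - t) * L.f x + t * L.f u :=
      L.convexOn.2 hx' hu (by linarith [ht.2]) (le_of_lt ht.1) (by ring)
    rw [div_le_iff₀ ht.1]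
    have h0 : x + (0:ℝ) • (u - x) = x := by simp
    rw [h0, heq]
    nlinarith [hcomb]
  linarith

lemma conj_grad {x : X} (hx : x ∈ interior L.dom) :
    L.grad x ∈ L.domConj ∧ L.conj (L.grad x) = ⟪x, L.grad x⟫_ℝ - L.f x := by
  have hx' : x ∈ L.dom := interior_subset hx
  have hub : ∀ a ∈ (fun u => ⟪u, L.grad x⟫_ℝ - L.f u) '' L.dom, a ≤ ⟪x, L.grad x⟫_ℝ - L.f x := by
    rintro a ⟨u, hu, rfl⟩
    have := L.subgrad hx hu
    rw [inner_sub_right] at this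
    show ⟪u, L.grad x⟫_ℝ - L.f u ≤ ⟪x, L.grad x⟫_ℝ - L.f x
    have c1 : ⟪u, L.grad x⟫_ℝ = ⟪L.grad x, u⟫_ℝ := real_inner_comm _ _
    have c2 : ⟪x, L.grad x⟫_ℝ = ⟪L.grad x, x⟫_ℝ := real_inner_comm _ _
    linarith
  have hmem : L.grad x ∈ L.domConj := (L.domConj_spec _).2 ⟨_, hub⟩
  refine ⟨hmem, ?_⟩
  exact (L.conj_spec _ hmem).unique (IsGreatest.isLUB ⟨⟨x, hx', rfl⟩, hub⟩)

lemma convexOn_conj : ConvexOn ℝ L.domConj L.conj := by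
  have hval : ∀ y ∈ L.domConj, ∀ u ∈ L.dom, ⟪u, y⟫_ℝ - L.f u ≤ L.conj y := by
    intro y hy u hu
    exact (L.conj_spec y hy).1 ⟨u, hu, rfl⟩
  have hcomb : ∀ y₁ ∈ L.domConj, ∀ y₂ ∈ L.domConj, ∀ a b : ℝ, 0 ≤ a → 0 ≤ b → a + b = 1 →
      ∀ u ∈ L.dom, ⟪u, a • y₁ + b • y₂⟫_ℝ - L.f u ≤ a * L.conj y₁ + b * L.conj y₂ := by
    intro y₁ h₁ y₂ h₂ a b ha hb hab u hu
    have e : ⟪u, a • y₁ + b • y₂⟫_ℝ = a * ⟪u, y₁⟫_ℝ + b * ⟪u, y₂⟫_ℝ := by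
      rw [inner_add_right, real_inner_smul_right, real_inner_smul_right]
    have i1 := mul_le_mul_of_nonneg_left (hval y₁ h₁ u hu) ha
    have i2 := mul_le_mul_of_nonneg_left (hval y₂ h₂ u hu) hb
    have : a * L.f u + b * L.f u = L.f u := by rw [← add_mul, hab, one_mul]
    rw [e]; nlinarith
  have hdc : ∀ y₁ ∈ L.domConj, ∀ y₂ ∈ L.domConj, ∀ a b : ℝ, 0 ≤ a → 0 ≤ b → a + b = 1 →
      a • y₁ + b • y₂ ∈ L.domConj := by
    intro y₁ h₁ y₂ h₂ a b ha hb hab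
    exact (L.domConj_spec _).2 ⟨a * L.conj y₁ + b * L.conj y₂, by
      rintro v ⟨u, hu, rfl⟩; exact hcomb y₁ h₁ y₂ h₂ a b ha hb hab u hu⟩
  refine ⟨fun y₁ h₁ y₂ h₂ a b ha hb hab => hdc y₁ h₁ y₂ h₂ a b ha hb hab, ?_⟩
  intro y₁ h₁ y₂ h₂ a b ha hb hab
  refine ((L.conj_spec _ (hdc y₁ h₁ y₂ h₂ a b ha hb hab)).2 ?_)
  rintro v ⟨u, hu, rfl⟩
  exact hcomb y₁ h₁ y₂ h₂ a b ha hb hab u hu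

lemma mem_interior_of_subgrad {u w : X} (hu : u ∈ L.dom)
    (hsub : ∀ z ∈ L.dom, L.f u + ⟪w, z - u⟫_ℝ ≤ L.f z) : u ∈ interior L.dom := by
  by_contra hni
  obtain ⟨x0, hx0⟩ := L.int_dom_nonempty
  obtain ⟨r0, hr0, hball⟩ := Metric.isOpen_iff.1 isOpen_interior x0 hx0
  set r : ℝ := r0 / 2 with hr_def
  have hr : 0 < r := by positivity
  have hcb : Metric.closedBall x0 r ⊆ interior L.dom := fun z hz =>
    hball (lt_of_le_of_lt (Metric.mem_closedBall.1 hz) (by rw [hr_def]; linarith))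
  have hcont : ContinuousOn L.f (Metric.closedBall x0 r) :=
    (L.convexOn.continuousOn_interior).mono hcb
  obtain ⟨M, hM⟩ := (isCompact_closedBall x0 r).bddAbove_image hcont
  have hMval : ∀ z ∈ Metric.closedBall x0 r, L.f z ≤ M := fun z hz => hM ⟨z, hz, rfl⟩
  set m : ℝ := L.f u - ‖w‖ * ‖x0 - u‖ with hm_def
  set B : ℝ := M - m + ‖w‖ * ‖x0 - u‖ with hB_def
  have hseg : ∀ t : ℝ, t ∈ Set.Ioc (0:ℝ) 1 → u + t • (x0 - u) ∈ interior L.dom :=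
    fun t ht => L.dom_convex.add_smul_sub_mem_interior hu hx0 ht
  have hinner_bd : -(‖w‖ * ‖x0 - u‖) ≤ ⟪w, x0 - u⟫_ℝ := by
    have h1 := abs_real_inner_le_norm w (x0 - u)
    have h2 := neg_abs_le ⟪w, x0 - u⟫_ℝ
    linarith
  have hbound : ∀ t : ℝ, t ∈ Set.Ioc (0:ℝ) 1 →
      r * ‖L.grad (u + t • (x0 - u))‖ ≤ B := by
    intro t ht
    set ut : X := u + t • (x0 - u) with hut_def
    set wt : X := L.grad ut with hwt_def
    have hut : ut ∈ interior L.dom := hseg t ht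
    have hut' : ut ∈ L.dom := interior_subset hut
    have hsub_t : ∀ z ∈ L.dom, L.f ut + ⟪wt, z - ut⟫_ℝ ≤ L.f z := fun z hz => L.subgrad hut hz
    have hdiff : ut - u = t • (x0 - u) := by rw [hut_def]; abel
    have hdiff2 : u - ut = -(t • (x0 - u)) := by rw [hut_def]; abel
    have hdiff3 : x0 - ut = (1 - t) • (x0 - u) := by rw [hut_def]; module
    have hfut_lb : m ≤ L.f ut := by
      have h1 := hsub ut hut'
      rw [hdiff, real_inner_smul_right] at h1
      have h3 : t * ⟪w, x0 - u⟫_ℝ ≥ -(‖w‖ * ‖x0 - u‖) := by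
        nlinarith [ht.1, ht.2, norm_nonneg w, norm_nonneg (x0 - u),
          mul_nonneg (norm_nonneg w) (norm_nonneg (x0 - u))]
      rw [hm_def]; linarith
    have hmono : ⟪w, x0 - u⟫_ℝ ≤ ⟪wt, x0 - u⟫_ℝ := by
      have h1 := hsub ut hut'
      have h2 := hsub_t u hu
      rw [hdiff, real_inner_smul_right] at h1
      rw [hdiff2, inner_neg_right, real_inner_smul_right] at h2
      have : t * ⟪w, x0 - u⟫_ℝ ≤ t * ⟪wt, x0 - u⟫_ℝ := by linarith
      exact le_of_mul_le_mul_left (by linarith) ht.1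
    have hx0ut : -(‖w‖ * ‖x0 - u‖) ≤ ⟪wt, x0 - ut⟫_ℝ := by
      rw [hdiff3, real_inner_smul_right]
      nlinarith [ht.1, ht.2, hinner_bd, hmono,
        mul_nonneg (norm_nonneg w) (norm_nonneg (x0 - u))]
    have hzbd : ∀ z ∈ Metric.closedBall x0 r, ⟪wt, z - ut⟫_ℝ ≤ M - m := by
      intro z hz
      have h1 := hsub_t z (interior_subset (hcb hz))
      have h2 := hMval z hz
      linarith
    by_cases h0 : wt = 0
    · have := hzbd x0 (Metric.mem_closedBall_self hr.le)
      rw [h0] at this ⊢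
      simp only [inner_zero_left] at this
      rw [norm_zero, mul_zero, hB_def]
      have := hzbd x0 (Metric.mem_closedBall_self hr.le)
      rw [h0] at this; simp only [inner_zero_left] at this
      have h3 : (0:ℝ) ≤ ‖w‖ * ‖x0 - u‖ := mul_nonneg (norm_nonneg _) (norm_nonneg _)
      have h4 : m ≤ M := by
        have := hMval x0 (Metric.mem_closedBall_self hr.le)
        have h5 := hfut_lb
        have h6 := hsub_t x0 (interior_subset hx0)
        rw [h0] at h6; simp only [inner_zero_left] at h6
        linarith [hMval x0 (Metric.mem_closedBall_self hr.le)]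
      linarith
    · set z : X := x0 + (r / ‖wt‖) • wt with hz_def
      have hwtn : (0:ℝ) < ‖wt‖ := norm_pos_iff.2 h0
      have hzmem : z ∈ Metric.closedBall x0 r := by
        rw [Metric.mem_closedBall, dist_eq_norm, hz_def, add_sub_cancel_left, norm_smul]
        rw [Real.norm_eq_abs, abs_of_pos (div_pos hr hwtn), div_mul_cancel₀ _ (ne_of_gt hwtn)]
      have hdecomp : z - ut = (z - x0) + (x0 - ut) := by abel
      have hinner_z : ⟪wt, z - x0⟫_ℝ = r * ‖wt‖ := by
        rw [hz_def, add_sub_cancel_left, real_inner_smul_right, real_inner_self_eq_norm_sq]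
        field_simp
      have := hzbd z hzmem
      rw [hdecomp, inner_add_right, hinner_z] at this
      rw [hB_def]; linarith
  set un : ℕ → X := fun n => u + (1 / ((n:ℝ) + 1)) • (x0 - u) with hun_def
  have htn : ∀ n : ℕ, (1 / ((n:ℝ) + 1)) ∈ Set.Ioc (0:ℝ) 1 := by
    intro n
    constructor
    · positivity
    · rw [div_le_one (by positivity)]
      have : (0:ℝ) ≤ (n:ℝ) := Nat.cast_nonneg n
      linarith
  have hun_mem : ∀ n, un n ∈ interior L.dom := fun n => hseg _ (htn n)
  have hfront : u ∈ frontier L.dom := ⟨subset_closure hu, hni⟩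
  have htend : Tendsto un atTop (𝓝 u) := by
    have h1 := (tendsto_one_div_add_atTop_nhds_zero_nat (𝕜 := ℝ)).smul_const (x0 - u)
    rw [zero_smul] at h1
    have h2 := h1.const_add u
    rw [add_zero] at h2
    exact h2
  have hblow := L.grad_blowup un u hun_mem hfront htend
  obtain ⟨n, hn⟩ := (hblow.eventually (eventually_gt_atTop (B / r))).exists
  have := hbound _ (htn n)
  rw [← le_div_iff₀' hr] at this
  exact absurd this (not_le.2 hn)

lemma exists_attain {w : X} (hw : w ∈ interior L.domConj) :
    ∃ u ∈ L.dom, (∀ z ∈ L.dom, ⟪z, w⟫_ℝ - L.f z ≤ ⟪u, w⟫_ℝ - L.f u) ∧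
      L.conj w = ⟪u, w⟫_ℝ - L.f u := by
  have hwd : w ∈ L.domConj := interior_subset hw
  have hlub := L.conj_spec w hwd
  have hub : ∀ z ∈ L.dom, ⟪z, w⟫_ℝ - L.f z ≤ L.conj w := fun z hz => hlub.1 ⟨z, hz, rfl⟩
  obtain ⟨ε0, hε0, hball⟩ := Metric.isOpen_iff.1 isOpen_interior w hw
  set ε : ℝ := ε0 / 2 with hε_def
  have hε : 0 < ε := by positivity
  have hcbi : Metric.closedBall w ε ⊆ interior L.domConj := fun z hz =>
    hball (lt_of_le_of_lt (Metric.mem_closedBall.1 hz) (by rw [hε_def]; linarith))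
  have hcb : Metric.closedBall w ε ⊆ L.domConj := fun z hz => interior_subset (hcbi hz)
  obtain ⟨M, hM⟩ := (isCompact_closedBall w ε).bddAbove_image
    ((L.convexOn_conj.continuousOn_interior).mono hcbi)
  have hMval : ∀ z ∈ Metric.closedBall w ε, L.conj z ≤ M := fun z hz => hM ⟨z, hz, rfl⟩
  have hex : ∀ n : ℕ, ∃ u ∈ L.dom, L.conj w - 1 / ((n:ℝ) + 1) < ⟪u, w⟫_ℝ - L.f u := by
    intro n
    obtain ⟨v, hv, h1, _⟩ := hlub.exists_between_sub_self (show (0:ℝ) < 1/((n:ℝ)+1) by positivity)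
    obtain ⟨u, hu, rfl⟩ := hv
    exact ⟨u, hu, h1⟩
  choose u hu hgt using hex
  set R : ℝ := max ((M - L.conj w + 1) / ε) 0 with hR_def
  have hR : ∀ n, ‖u n‖ ≤ R := by
    intro n
    by_cases h0 : u n = 0
    · rw [h0, norm_zero]; exact le_max_right _ _
    · set v : X := ‖u n‖⁻¹ • u n with hv_def
      have hv1 : ‖v‖ = 1 := norm_smul_inv_norm h0
      have hmemcb : w + ε • v ∈ Metric.closedBall w ε := by
        rw [Metric.mem_closedBall, dist_eq_norm, add_sub_cancel_left, norm_smul, hv1, Real.norm_eq_abs,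
          abs_of_pos hε, mul_one]
      have hle : ⟪u n, w + ε • v⟫_ℝ - L.f (u n) ≤ M :=
        le_trans ((L.conj_spec _ (hcb hmemcb)).1 ⟨u n, hu n, rfl⟩) (hMval _ hmemcb)
      have hinner : ⟪u n, ε • v⟫_ℝ = ε * ‖u n‖ := by
        rw [hv_def, real_inner_smul_right, real_inner_smul_right,
          real_inner_self_eq_norm_sq]
        have : ‖u n‖ ≠ 0 := norm_ne_zero_iff.2 h0
        field_simp
      have h1 : L.conj w - 1 < ⟪u n, w⟫_ℝ - L.f (u n) := by
        have h2 := hgt n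
        have h3 : 1 / ((n:ℝ) + 1) ≤ 1 := by
          rw [div_le_one (by positivity)]
          have : (0:ℝ) ≤ (n:ℝ) := Nat.cast_nonneg n
          linarith
        linarith
      rw [inner_add_right, hinner] at hle
      have h4 : ‖u n‖ ≤ (M - L.conj w + 1) / ε := by
        rw [le_div_iff₀ hε]
        nlinarith
      exact le_trans h4 (le_max_left _ _)
  have hval_tend : Tendsto (fun n => ⟪u n, w⟫_ℝ - L.f (u n)) atTop (𝓝 (L.conj w)) := by
    apply tendsto_of_tendsto_of_tendsto_of_le_of_le
      (g := fun n : ℕ => L.conj w - 1 / ((n:ℝ) + 1)) (h := fun _ : ℕ => L.conj w)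
    · have h1 := Tendsto.sub (tendsto_const_nhds (α := ℕ) (x := L.conj w))
        tendsto_one_div_add_atTop_nhds_zero_nat
      rw [sub_zero] at h1
      exact h1
    · exact tendsto_const_nhds
    · exact fun n => (hgt n).le
    · exact fun n => hub _ (hu n)
  obtain ⟨ul, _, φ, hφ, hconv⟩ := tendsto_subseq_of_bounded
    (Metric.isBounded_closedBall (x := (0:X)) (r := R))
    (fun n => mem_closedBall_zero_iff.2 (hR n))
  have hval2 : Tendsto (fun n => ⟪u (φ n), w⟫_ℝ - L.f (u (φ n))) atTop (𝓝 (L.conj w)) :=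
    hval_tend.comp hφ.tendsto_atTop
  have hinner2 : Tendsto (fun n => ⟪u (φ n), w⟫_ℝ) atTop (𝓝 ⟪ul, w⟫_ℝ) :=
    hconv.inner tendsto_const_nhds
  have hf2 : Tendsto (fun n => L.f (u (φ n))) atTop (𝓝 (⟪ul, w⟫_ℝ - L.conj w)) := by
    have h1 := hinner2.sub hval2
    apply h1.congr
    intro n; ring
  have hepi : (ul, ⟪ul, w⟫_ℝ - L.conj w) ∈ {p : X × ℝ | p.1 ∈ L.dom ∧ L.f p.1 ≤ p.2} := by
    apply L.closedEpi.mem_of_tendsto (hconv.prodMk_nhds hf2)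
    filter_upwards with n
    exact ⟨hu (φ n), le_refl _⟩
  have h5 : L.conj w ≤ ⟪ul, w⟫_ℝ - L.f ul := by
    have := hepi.2
    simp only at this
    linarith
  have h6 : ⟪ul, w⟫_ℝ - L.f ul ≤ L.conj w := hub ul hepi.1
  exact ⟨ul, hepi.1, fun z hz => le_trans (hub z hz) (by linarith),
    le_antisymm (by linarith) h6⟩

lemma dual {w : X} (hw : w ∈ interior L.domConj) :
    L.gradConj w ∈ interior L.dom ∧ L.grad (L.gradConj w) = w ∧
      L.conj w = ⟪L.gradConj w, w⟫_ℝ - L.f (L.gradConj w) := by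
  obtain ⟨u, hu, hmax, hconj⟩ := L.exists_attain hw
  have hsub : ∀ z ∈ L.dom, L.f u + ⟪w, z - u⟫_ℝ ≤ L.f z := by
    intro z hz
    have h1 := hmax z hz
    rw [inner_sub_right]
    have c1 : ⟪w, z⟫_ℝ = ⟪z, w⟫_ℝ := real_inner_comm _ _
    have c2 : ⟪w, u⟫_ℝ = ⟪u, w⟫_ℝ := real_inner_comm _ _
    linarith
  have hui : u ∈ interior L.dom := L.mem_interior_of_subgrad hu hsub
  have hgrad_eq : w = L.grad u := subgrad_unique hui (L.hasGrad u hui) hsub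
  have husubconj : ∀ y ∈ L.domConj, L.conj w + ⟪u, y - w⟫_ℝ ≤ L.conj y := by
    intro y hy
    have h1 : ⟪u, y⟫_ℝ - L.f u ≤ L.conj y := (L.conj_spec y hy).1 ⟨u, hu, rfl⟩
    rw [inner_sub_right, hconj]
    linarith
  have hu_eq : u = L.gradConj w := subgrad_unique hw (L.hasGradConj w hw) husubconj
  rw [← hu_eq]
  exact ⟨hui, hgrad_eq.symm, hconj⟩

end LegendreFn

/-- Properties of the dual objective `Ψ^x_C` of the Bregman projection
problem onto the affine set `C = {z | A z = b}`. -/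
theorem stmt_1 {X Y : Type*} [NormedAddCommGroup X] [InnerProductSpace ℝ X]
    [FiniteDimensional ℝ X] [NormedAddCommGroup Y] [InnerProductSpace ℝ Y]
    [FiniteDimensional ℝ Y]
    (L : LegendreFn X) (A : X →L[ℝ] Y) (b : Y) (C : Set X) (hC : C = {z | A z = b})
    (hCint : (C ∩ interior L.dom).Nonempty)
    (Ψ : X → Y → ℝ)
    (hΨ : ∀ (x : X) (lam : Y), Ψ x lam =
      L.conj (L.grad x + ContinuousLinearMap.adjoint A lam) - L.conj (L.grad x) - ⟪lam, b⟫_ℝ)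
    (x : X) (hx : x ∈ interior L.dom) (lam : Y)
    (hfeas : L.grad x + ContinuousLinearMap.adjoint A lam ∈ interior L.domConj) :
    (∀ z ∈ C ∩ L.dom,
        Ψ x lam =
          L.breg z (L.gradConj (L.grad x + ContinuousLinearMap.adjoint A lam)) -
            L.breg z x) ∧
      ∀ z ∈ C ∩ L.dom,
        L.breg z (L.proj C x) ≤
          L.breg z (L.gradConj (L.grad x + ContinuousLinearMap.adjoint A lam)) := by
  set w : X := L.grad x + ContinuousLinearMap.adjoint A lam with hw_def
  set p : X := L.gradConj w with hp_def
  obtain ⟨hp_int, hgradp, hconjw⟩ := L.dual hfeas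
  obtain ⟨_, hconjx⟩ := L.conj_grad hx
  -- part (i)
  have key : ∀ z ∈ C ∩ L.dom, Ψ x lam = L.breg z p - L.breg z x := by
    rintro z ⟨hzC, hzdom⟩
    have hzb : A z = b := by rw [hC] at hzC; exact hzC
    have hz1 : ⟪z, ContinuousLinearMap.adjoint A lam⟫_ℝ = ⟪lam, b⟫_ℝ := by
      rw [real_inner_comm, ContinuousLinearMap.adjoint_inner_left, hzb]
    rw [hΨ, ← hw_def, hconjw, hconjx, LegendreFn.breg, LegendreFn.breg, ← hp_def, hgradp]
    simp only [hw_def, inner_sub_left, inner_add_right]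
    linarith [hz1]
  refine ⟨key, ?_⟩
  -- part (ii)
  have hCclosed : IsClosed C := by
    rw [hC]
    exact isClosed_singleton.preimage A.continuous
  have hCconvex : Convex ℝ C := by
    intro z₁ h₁ z₂ h₂ a c ha hc hac
    rw [hC] at h₁ h₂ ⊢
    simp only [Set.mem_setOf_eq] at h₁ h₂ ⊢
    rw [map_add, A.map_smul, A.map_smul, h₁, h₂, ← add_smul, hac, one_smul]
  obtain ⟨q0, ⟨hq0C, hq0i⟩, hq0min⟩ := L.proj_exists C hCclosed hCconvex hCint x hx
  have hbp : L.IsBregProj C x q0 := by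
    refine ⟨hq0C, hq0i, fun z hz => ?_⟩
    have := hq0min z hz
    simp only [LegendreFn.breg, inner_sub_left]
    linarith
  have hproj : L.IsBregProj C x (L.proj C x) :=
    Classical.epsilon_spec (⟨q0, hbp⟩ : ∃ p', L.IsBregProj C x p')
  set q : X := L.proj C x with hq_def
  obtain ⟨hqC, hqi, hqmin⟩ := hproj
  have hq_dom : q ∈ L.dom := interior_subset hqi
  have hqCd : q ∈ C ∩ L.dom := ⟨hqC, hq_dom⟩
  rintro z ⟨hzC, hzdom⟩
  -- variational inequality at q
  have hVI : 0 ≤ ⟪L.grad q, z - q⟫_ℝ - ⟪z - q, L.grad x⟫_ℝ := by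
    set g : ℝ → ℝ := fun t => L.f (q + t • (z - q)) - ⟪q + t • (z - q), L.grad x⟫_ℝ
      with hg_def
    have hd1 := hasDerivAt_line (L.hasGrad q hqi) (z - q)
    have hd2 : HasDerivAt (fun t : ℝ => ⟪q + t • (z - q), L.grad x⟫_ℝ)
        ⟪z - q, L.grad x⟫_ℝ 0 := by
      have heq : (fun t : ℝ => ⟪q + t • (z - q), L.grad x⟫_ℝ)
          = fun t : ℝ => ⟪q, L.grad x⟫_ℝ + t * ⟪z - q, L.grad x⟫_ℝ := by
        funext t
        rw [inner_add_left, real_inner_smul_left]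
      rw [heq]
      simpa using ((hasDerivAt_id (0:ℝ)).mul_const ⟪z - q, L.grad x⟫_ℝ).const_add
        ⟪q, L.grad x⟫_ℝ
    have hdg : HasDerivAt g (⟪L.grad q, z - q⟫_ℝ - ⟪z - q, L.grad x⟫_ℝ) 0 := hd1.sub hd2
    refine le_deriv_of_slope one_pos hdg (fun t ht => ?_)
    have hzt_mem : q + t • (z - q) ∈ C ∩ L.dom := by
      constructor
      · rw [hC]
        show A (q + t • (z - q)) = b
        have hqb : A q = b := by rw [hC] at hqC; exact hqC
        rw [map_add, A.map_smul, map_sub, hqb]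
        rw [hC] at hzC
        show b + t • (A z - b) = b
        rw [hzC]
        simp
      · have heq : q + t • (z - q) = (1 - t) • q + t • z := by module
        rw [heq]
        exact L.dom_convex hq_dom hzdom (by linarith [ht.2]) ht.1.le (by ring)
    have hmin := hqmin _ hzt_mem
    have hg0 : g 0 = L.f q - ⟪q, L.grad x⟫_ℝ := by
      simp [hg_def]
    have hgt' : g t = L.f (q + t • (z - q)) - ⟪q + t • (z - q), L.grad x⟫_ℝ := rfl
    have hbregq : L.breg q x = L.f q - L.f x - (⟪q, L.grad x⟫_ℝ - ⟪x, L.grad x⟫_ℝ) := by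
      rw [LegendreFn.breg, inner_sub_left]
    have hbregzt : L.breg (q + t • (z - q)) x = L.f (q + t • (z - q)) - L.f x -
        (⟪q + t • (z - q), L.grad x⟫_ℝ - ⟪x, L.grad x⟫_ℝ) := by
      rw [LegendreFn.breg, inner_sub_left]
    have : g 0 ≤ g t := by
      rw [hg0, hgt']
      linarith [hmin]
    exact div_nonneg (by linarith) ht.1.le
  -- nonnegativity of breg q p
  have hbqp : 0 ≤ L.breg q p := by
    have := L.subgrad hp_int hq_dom
    rw [hgradp] at this
    rw [LegendreFn.breg, hgradp]
    have c1 : ⟪q - p, w⟫_ℝ = ⟪w, q - p⟫_ℝ := real_inner_comm _ _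
    linarith
  -- combine
  have e1 := key z ⟨hzC, hzdom⟩
  have e2 := key q hqCd
  -- three point identity
  have h3pt : L.breg z x - L.breg z q - L.breg q x
      = ⟪z - q, L.grad q⟫_ℝ - ⟪z - q, L.grad x⟫_ℝ := by
    simp only [LegendreFn.breg, inner_sub_left]
    ring
  have c2 : ⟪z - q, L.grad q⟫_ℝ = ⟪L.grad q, z - q⟫_ℝ := real_inner_comm _ _
  linarith
end
end

section
/- Suppose φ* is twice differentiable and assumption H1 holds. Then assumption H2₁ (respectively, in the stochastic setting, assumption H2₂) holds if any one of the following conditions is met: (a) for every x ∈ int(dom φ) ∩ C, ∇²φ*(∇φ(x)) is invertible; (b) φ is twice differentiable on int(dom φ); (c) I is finite and, for every x ∈ int(dom φ) ∩ C, A ∇²φ*(∇φ(x)) ≠ 0; (d) I is finite, X = ℝⁿ, 0 ∉ C, and φ(x) = (1/p)‖x‖_p^p for some p ∈ (1,2). -/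
open Set Filter Topology MeasureTheory ProbabilityTheory
open scoped InnerProductSpace ENNReal Classical

noncomputable section

set_option maxHeartbeats 1600000

open scoped Pointwise

section AuxMP

open ContinuousLinearMap

variable {E F : Type*} [NormedAddCommGroup E] [InnerProductSpace ℝ E] [FiniteDimensional ℝ E]
  [NormedAddCommGroup F] [InnerProductSpace ℝ F] [FiniteDimensional ℝ F]

set_option linter.unusedSectionVars false

private lemma adj3 {A B C D : Type*} [NormedAddCommGroup A] [InnerProductSpace ℝ A]
    [FiniteDimensional ℝ A] [NormedAddCommGroup B] [InnerProductSpace ℝ B]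
    [FiniteDimensional ℝ B] [NormedAddCommGroup C] [InnerProductSpace ℝ C]
    [FiniteDimensional ℝ C] [NormedAddCommGroup D] [InnerProductSpace ℝ D]
    [FiniteDimensional ℝ D] (P : C →L[ℝ] D) (Q : B →L[ℝ] C) (R : A →L[ℝ] B) :
    ContinuousLinearMap.adjoint (P ∘L Q ∘L R)
      = ContinuousLinearMap.adjoint R ∘L
        (ContinuousLinearMap.adjoint Q ∘L ContinuousLinearMap.adjoint P) := by
  rw [adjoint_comp, adjoint_comp, comp_assoc]

lemma mp_unique {T : E →L[ℝ] F} {G₁ G₂ : F →L[ℝ] E} (h1 : IsMPInv T G₁) (h2 : IsMPInv T G₂) :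
    G₁ = G₂ := by
  obtain ⟨h1a, h1b, h1c, h1d⟩ := h1
  obtain ⟨h2a, h2b, h2c, h2d⟩ := h2
  have p1a : ∀ z, T (G₁ (T z)) = T z := fun z => DFunLike.congr_fun h1a z
  have p2a : ∀ z, T (G₂ (T z)) = T z := fun z => DFunLike.congr_fun h2a z
  have p1b : ∀ z, G₁ (T (G₁ z)) = G₁ z := fun z => DFunLike.congr_fun h1b z
  have p2b : ∀ z, G₂ (T (G₂ z)) = G₂ z := fun z => DFunLike.congr_fun h2b z
  have k1 : (T ∘L G₁) ∘L (T ∘L G₂) = T ∘L G₂ := by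
    ext v; exact p1a (G₂ v)
  have k3 : (T ∘L G₂) ∘L (T ∘L G₁) = T ∘L G₁ := by
    ext v; exact p2a (G₁ v)
  have e1 : T ∘L G₁ = T ∘L G₂ := by
    have k2 : ContinuousLinearMap.adjoint ((T ∘L G₁) ∘L (T ∘L G₂)) = T ∘L G₂ := by
      rw [k1, h2c]
    rw [adjoint_comp, h1c, h2c, k3] at k2
    exact k2
  have l1 : (G₂ ∘L T) ∘L (G₁ ∘L T) = G₂ ∘L T := by
    ext v; exact congrArg G₂ (p1a v)
  have l3 : (G₁ ∘L T) ∘L (G₂ ∘L T) = G₁ ∘L T := by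
    ext v; exact congrArg G₁ (p2a v)
  have e2 : G₁ ∘L T = G₂ ∘L T := by
    have l2 : ContinuousLinearMap.adjoint ((G₂ ∘L T) ∘L (G₁ ∘L T)) = G₂ ∘L T := by
      rw [l1, h2d]
    rw [adjoint_comp, h2d, h1d, l3] at l2
    exact l2
  ext v
  have s1 : T (G₁ v) = T (G₂ v) := DFunLike.congr_fun e1 v
  have s2 : ∀ z, G₁ (T z) = G₂ (T z) := fun z => DFunLike.congr_fun e2 z
  calc G₁ v = G₁ (T (G₁ v)) := (p1b v).symm
    _ = G₁ (T (G₂ v)) := by rw [s1]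
    _ = G₂ (T (G₂ v)) := s2 (G₂ v)
    _ = G₂ v := p2b v

lemma mp_selfadjoint {T G : F →L[ℝ] F}
    (hsym : ContinuousLinearMap.adjoint T = T) (h : IsMPInv T G) :
    ContinuousLinearMap.adjoint G = G := by
  obtain ⟨ha, hb, hc, hd⟩ := h
  have key1 : T ∘L ContinuousLinearMap.adjoint G = G ∘L T := by
    have k := adjoint_comp G T
    rw [hd, hsym] at k
    exact k.symm
  have key2 : ContinuousLinearMap.adjoint G ∘L T = T ∘L G := by
    have k := adjoint_comp T G
    rw [hc, hsym] at k
    exact k.symm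
  have hadj : IsMPInv T (ContinuousLinearMap.adjoint G) := by
    refine ⟨?_, ?_, ?_, ?_⟩
    · have h0 := congrArg ContinuousLinearMap.adjoint ha
      rw [adj3, hsym] at h0
      exact h0
    · have h0 := congrArg ContinuousLinearMap.adjoint hb
      rw [adj3, hsym] at h0
      exact h0
    · rw [key1]; exact hd
    · rw [key2]; exact hc
  exact mp_unique hadj ⟨ha, hb, hc, hd⟩

/-- Core uniform bound. -/
lemma core_bound {X Yi : Type*} [NormedAddCommGroup X] [InnerProductSpace ℝ X]
    [FiniteDimensional ℝ X] [NormedAddCommGroup Yi] [InnerProductSpace ℝ Yi]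
    [FiniteDimensional ℝ Yi]
    {H : X →L[ℝ] X} (hsym : ∀ u v : X, ⟪H u, v⟫_ℝ = ⟪u, H v⟫_ℝ)
    {c : ℝ} (hc : 0 < c) (hcoer : ∀ z : X, c * ‖z‖^2 ≤ ⟪H z, z⟫_ℝ)
    (A : X →L[ℝ] Yi) {G : Yi →L[ℝ] Yi}
    (hG : IsMPInv (A ∘L H ∘L ContinuousLinearMap.adjoint A) G) :
    ‖ContinuousLinearMap.adjoint A ∘L G ∘L A‖ ≤ 1 / c := by
  set T : Yi →L[ℝ] Yi := A ∘L H ∘L ContinuousLinearMap.adjoint A with hT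
  have hHadj : ContinuousLinearMap.adjoint H = H := by
    symm
    rw [eq_adjoint_iff]
    exact hsym
  have hTsym : ContinuousLinearMap.adjoint T = T := by
    rw [hT, adj3, adjoint_adjoint, hHadj, ← comp_assoc]
  have hGadj : ContinuousLinearMap.adjoint G = G := mp_selfadjoint hTsym hG
  have hGsym : ∀ a b : Yi, ⟪G a, b⟫_ℝ = ⟪a, G b⟫_ℝ := by
    intro a b
    conv_lhs => rw [← hGadj]
    rw [adjoint_inner_left]
  have hTapp : ∀ w : Yi, T w = A (H (ContinuousLinearMap.adjoint A w)) := fun w => rfl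
  have hTinner : ∀ w : Yi, ⟪T w, w⟫_ℝ
      = ⟪H (ContinuousLinearMap.adjoint A w), ContinuousLinearMap.adjoint A w⟫_ℝ := by
    intro w
    rw [hTapp, real_inner_comm, ← adjoint_inner_left]
    exact real_inner_comm _ _
  have hGTG : ∀ v : Yi, T (G (T v)) = T v := fun v => DFunLike.congr_fun hG.1 v
  have hrange : ∀ u : X, ∃ z : Yi, T z = A u := by
    intro u
    obtain ⟨p, hp, w, hw, hdec⟩ := Submodule.exists_add_mem_mem_orthogonal
      (K := LinearMap.range (T : Yi →ₗ[ℝ] Yi)) (A u)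
    obtain ⟨z, hz0⟩ := hp
    have hz : T z = p := by simpa using hz0
    have hTw : ⟪T w, w⟫_ℝ = 0 := by
      have hmem : T w ∈ LinearMap.range (T : Yi →ₗ[ℝ] Yi) := ⟨w, rfl⟩
      exact (Submodule.mem_orthogonal _ w).1 hw _ hmem
    have hAw : ContinuousLinearMap.adjoint A w = 0 := by
      have h1 := hcoer (ContinuousLinearMap.adjoint A w)
      rw [← hTinner, hTw] at h1
      have h2 : ‖ContinuousLinearMap.adjoint A w‖^2 = 0 :=
        le_antisymm (by nlinarith) (sq_nonneg _)
      have h3 : ‖ContinuousLinearMap.adjoint A w‖ = 0 :=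
        (pow_eq_zero_iff two_ne_zero).1 h2
      exact norm_eq_zero.1 h3
    have hAuw : ⟪A u, w⟫_ℝ = 0 := by
      rw [real_inner_comm, ← adjoint_inner_left, hAw, inner_zero_left]
    have hTzw : ⟪(T z : Yi), w⟫_ℝ = 0 := by
      have hmem : (T z : Yi) ∈ LinearMap.range (T : Yi →ₗ[ℝ] Yi) := ⟨z, rfl⟩
      exact (Submodule.mem_orthogonal _ w).1 hw _ hmem
    have hwzero : w = 0 := by
      have h5 : ⟪A u, w⟫_ℝ = ⟪(T z : Yi), w⟫_ℝ + ⟪w, w⟫_ℝ := by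
        rw [hdec, ← hz, inner_add_left]
      rw [hAuw, hTzw] at h5
      have h6 : ⟪w, w⟫_ℝ = 0 := by linarith
      exact inner_self_eq_zero.1 h6
    exact ⟨z, by rw [hdec, ← hz, hwzero, add_zero]⟩
  have htheta : ∀ u : X, 0 ≤ ⟪G (A u), A u⟫_ℝ ∧ ⟪G (A u), A u⟫_ℝ ≤ ‖u‖^2 / c := by
    intro u
    set w : Yi := G (A u) with hwdef
    have hTww : T w = A u := by
      obtain ⟨z, hz⟩ := hrange u
      rw [hwdef, ← hz, hGTG, hz]
    have h0 : ⟪G (A u), A u⟫_ℝ = ⟪T w, w⟫_ℝ := by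
      rw [hTww, real_inner_comm]
    have hpos : 0 ≤ ⟪G (A u), A u⟫_ℝ := by
      rw [h0, hTinner]
      have h1 := hcoer (ContinuousLinearMap.adjoint A w)
      nlinarith [sq_nonneg ‖ContinuousLinearMap.adjoint A w‖]
    have hθAw : ⟪G (A u), A u⟫_ℝ = ⟪ContinuousLinearMap.adjoint A w, u⟫_ℝ := by
      rw [adjoint_inner_left]
    have hbound1 : ⟪G (A u), A u⟫_ℝ ≤ ‖ContinuousLinearMap.adjoint A w‖ * ‖u‖ := by
      rw [hθAw]; exact real_inner_le_norm _ _
    have hbound2 : c * ‖ContinuousLinearMap.adjoint A w‖^2 ≤ ⟪G (A u), A u⟫_ℝ := by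
      rw [h0, hTinner]
      exact hcoer _
    refine ⟨hpos, ?_⟩
    have hsq : ⟪G (A u), A u⟫_ℝ^2 ≤ ‖ContinuousLinearMap.adjoint A w‖^2 * ‖u‖^2 := by
      nlinarith [hbound1, hpos, norm_nonneg (ContinuousLinearMap.adjoint A w), norm_nonneg u]
    have hmul := mul_le_mul_of_nonneg_right hbound2 (sq_nonneg ‖u‖)
    have key : c * ⟪G (A u), A u⟫_ℝ^2 ≤ ⟪G (A u), A u⟫_ℝ * ‖u‖^2 := by
      nlinarith [hsq, hmul, hc]
    rcases eq_or_lt_of_le hpos with h | h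
    · rw [← h]; positivity
    · rw [le_div_iff₀ hc]
      nlinarith [key, h]
  set Emap : X →L[ℝ] X := ContinuousLinearMap.adjoint A ∘L G ∘L A with hE
  have hEinner : ∀ u v : X, ⟪Emap u, v⟫_ℝ = ⟪G (A u), A v⟫_ℝ := by
    intro u v
    rw [show Emap u = ContinuousLinearMap.adjoint A (G (A u)) from rfl, adjoint_inner_left]
  have hEsym : ∀ u v : X, ⟪Emap u, v⟫_ℝ = ⟪u, Emap v⟫_ℝ := by
    intro u v
    rw [hEinner u v, hGsym,
      show (⟪u, Emap v⟫_ℝ) = ⟪Emap v, u⟫_ℝ from real_inner_comm _ _, hEinner v u]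
    exact real_inner_comm _ _
  have hEdiag : ∀ u : X, ⟪Emap u, u⟫_ℝ = ⟪G (A u), A u⟫_ℝ := fun u => hEinner u u
  have hCS : ∀ u v : X, ⟪Emap u, v⟫_ℝ^2 ≤ ⟪Emap u, u⟫_ℝ * ⟪Emap v, v⟫_ℝ := by
    intro u v
    have hquad : ∀ t : ℝ, 0 ≤ ⟪Emap v, v⟫_ℝ * (t * t) + (2 * ⟪Emap u, v⟫_ℝ) * t
        + ⟪Emap u, u⟫_ℝ := by
      intro t
      have h1 : 0 ≤ ⟪Emap (u + t • v), u + t • v⟫_ℝ := by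
        rw [hEdiag]; exact (htheta _).1
      have h2 : ⟪Emap (u + t • v), u + t • v⟫_ℝ
          = ⟪Emap u, u⟫_ℝ + t * ⟪Emap u, v⟫_ℝ + t * ⟪Emap v, u⟫_ℝ
            + t * t * ⟪Emap v, v⟫_ℝ := by
        rw [map_add, _root_.map_smul]
        simp only [inner_add_left, inner_add_right, real_inner_smul_left,
          real_inner_smul_right]
        ring
      have h3 : ⟪Emap v, u⟫_ℝ = ⟪Emap u, v⟫_ℝ := by
        rw [hEsym v u, real_inner_comm]
      rw [h2, h3] at h1
      linarith
    have hd := discrim_le_zero hquad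
    unfold discrim at hd
    nlinarith [hd]
  have hnorm : ∀ u : X, ‖Emap u‖ ≤ (1/c) * ‖u‖ := by
    intro u
    rcases eq_or_lt_of_le (norm_nonneg (Emap u)) with h | h
    · rw [← h]; positivity
    · have e2' : ⟪Emap u, u⟫_ℝ ≤ ‖u‖^2/c := by rw [hEdiag]; exact (htheta u).2
      have e2pos : 0 ≤ ⟪Emap u, u⟫_ℝ := by rw [hEdiag]; exact (htheta u).1
      have e3' : ⟪Emap (Emap u), Emap u⟫_ℝ ≤ ‖Emap u‖^2/c := by
        rw [hEdiag]; exact (htheta (Emap u)).2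
      have e3pos : 0 ≤ ⟪Emap (Emap u), Emap u⟫_ℝ := by
        rw [hEdiag]; exact (htheta _).1
      have hq := hCS u (Emap u)
      have h1 : ⟪Emap u, Emap u⟫_ℝ = ‖Emap u‖^2 := real_inner_self_eq_norm_sq _
      rw [h1] at hq
      have step1 : ⟪Emap u, u⟫_ℝ * ⟪Emap (Emap u), Emap u⟫_ℝ
          ≤ (‖u‖^2/c) * (‖Emap u‖^2/c) := by
        apply mul_le_mul e2' e3' e3pos (by positivity)
      have step2 : (‖Emap u‖^2)^2 ≤ (‖u‖^2/c) * (‖Emap u‖^2/c) := le_trans hq step1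
      have hc2 : (0:ℝ) < c^2 := by positivity
      have step3 : ‖Emap u‖^2 * c^2 ≤ ‖u‖^2 := by
        have hN : (0:ℝ) < ‖Emap u‖^2 := by positivity
        rw [div_mul_div_comm] at step2
        have step2' := (le_div_iff₀ (by positivity : (0:ℝ) < c * c)).1 step2
        nlinarith [step2', hN]
      have step4 : c * ‖Emap u‖ ≤ ‖u‖ := by
        nlinarith [step3, norm_nonneg u, mul_pos hc h]
      rw [div_mul_eq_mul_div, le_div_iff₀ hc]
      nlinarith [step4]
  exact ContinuousLinearMap.opNorm_le_bound _ (by positivity) hnorm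

end AuxMP

section AuxLegendre

variable {X : Type*} [NormedAddCommGroup X] [InnerProductSpace ℝ X] [FiniteDimensional ℝ X]

private lemma le_of_forall_small {a d c : ℝ} (h : ∀ t : ℝ, 0 < t → t ≤ 1 → a + t * d < c) :
    a ≤ c := by
  by_contra hac
  push_neg at hac
  set t : ℝ := min 1 ((a - c) / (|d| + 1)) with ht
  have hd : 0 < |d| + 1 := by positivity
  have htpos : 0 < t := lt_min one_pos (div_pos (by linarith) hd)
  have ht1 : t ≤ 1 := min_le_left _ _
  have h2 : t * |d| ≤ ((a - c) / (|d| + 1)) * |d| := by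
    apply mul_le_mul_of_nonneg_right (min_le_right _ _) (abs_nonneg d)
  have h3 : ((a - c) / (|d| + 1)) * |d| < a - c := by
    rw [div_mul_eq_mul_div, div_lt_iff₀ hd]
    nlinarith [abs_nonneg d]
  have h4 : a + t * d < c := h t htpos ht1
  nlinarith [neg_abs_le d, mul_le_mul_of_nonneg_left (neg_abs_le d) htpos.le]

private lemma subgrad_of_convexOn {g : X → ℝ} {s : Set X} (hg : ConvexOn ℝ s g) {x v z : X}
    (hx : x ∈ s) (hz : z ∈ s) (hv : HasGradientAt g v x) :
    g x + ⟪v, z - x⟫_ℝ ≤ g z := by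
  have hcurve : HasDerivAt (fun t : ℝ => x + t • (z - x)) (z - x) 0 := by
    simpa using (hasDerivAt_id (0:ℝ)).smul_const (z - x) |>.const_add x
  have hx0 : x + (0:ℝ) • (z - x) = x := by simp
  have hcomp : HasDerivAt (fun t : ℝ => g (x + t • (z - x))) ⟪v, z - x⟫_ℝ 0 := by
    have hf := hasGradientAt_iff_hasFDerivAt.1 hv
    rw [← hx0] at hf
    simpa [InnerProductSpace.toDual_apply_apply, Function.comp_def] using hf.comp_hasDerivAt 0 hcurve
  have hslope := hasDerivAt_iff_tendsto_slope.1 hcomp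
  have hmon : Tendsto (slope (fun t : ℝ => g (x + t • (z - x))) 0) (𝓝[>] 0)
      (𝓝 ⟪v, z - x⟫_ℝ) := hslope.mono_left (nhdsWithin_mono _ (fun t ht => ne_of_gt ht))
  have hle : ⟪v, z - x⟫_ℝ ≤ g z - g x := by
    refine le_of_tendsto hmon ?_
    filter_upwards [Ioc_mem_nhdsGT_of_mem (by simp : (0:ℝ) ∈ Ico (0:ℝ) 1)] with t ht
    have hconv := hg.2 hx hz (by linarith [ht.2] : (0:ℝ) ≤ 1 - t) ht.1.le (by ring)
    have hpt : (1 - t) • x + t • z = x + t • (z - x) := by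
      rw [smul_sub]; module
    rw [hpt] at hconv
    rw [slope_def_field]
    rw [div_le_iff₀ (by simpa using ht.1)]
    simp only [sub_zero, hx0, smul_eq_mul] at hconv ⊢
    nlinarith [hconv]
  linarith

private lemma fenchelYoung (L : LegendreFn X) {w z : X} (hw : w ∈ L.domConj) (hz : z ∈ L.dom) :
    ⟪z, w⟫_ℝ - L.f z ≤ L.conj w :=
  (L.conj_spec w hw).1 ⟨z, hz, rfl⟩

private lemma grad_mem_domConj (L : LegendreFn X) {x : X} (hx : x ∈ interior L.dom) :
    L.grad x ∈ L.domConj ∧ L.conj (L.grad x) = ⟪x, L.grad x⟫_ℝ - L.f x := by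
  have hsub : ∀ z ∈ L.dom, ⟪z, L.grad x⟫_ℝ - L.f z ≤ ⟪x, L.grad x⟫_ℝ - L.f x := by
    intro z hz
    have h := subgrad_of_convexOn L.convexOn (interior_subset hx) hz (L.hasGrad x hx)
    have hinner : ⟪L.grad x, z - x⟫_ℝ = ⟪z, L.grad x⟫_ℝ - ⟪x, L.grad x⟫_ℝ := by
      rw [inner_sub_right, real_inner_comm x, real_inner_comm z]
    linarith
  have hub : (⟪x, L.grad x⟫_ℝ - L.f x) ∈ upperBounds ((fun z => ⟪z, L.grad x⟫_ℝ - L.f z) '' L.dom) := by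
    rintro r ⟨z, hz, rfl⟩; exact hsub z hz
  have hmem : L.grad x ∈ L.domConj := (L.domConj_spec _).2 ⟨_, hub⟩
  refine ⟨hmem, (L.conj_spec _ hmem).unique ⟨hub, ?_⟩⟩
  intro b hb
  exact hb ⟨x, interior_subset hx, rfl⟩

private lemma comb_ub (L : LegendreFn X) {y1 y2 : X} (h1 : y1 ∈ L.domConj) (h2 : y2 ∈ L.domConj)
    {a b : ℝ} (ha : 0 ≤ a) (hb : 0 ≤ b) (hab : a + b = 1) :
    (a * L.conj y1 + b * L.conj y2) ∈
      upperBounds ((fun z => ⟪z, a • y1 + b • y2⟫_ℝ - L.f z) '' L.dom) := by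
  rintro r ⟨z, hz, rfl⟩
  have e1 := fenchelYoung L h1 hz
  have e2 := fenchelYoung L h2 hz
  have hsplit : ⟪z, a • y1 + b • y2⟫_ℝ = a * ⟪z, y1⟫_ℝ + b * ⟪z, y2⟫_ℝ := by
    rw [inner_add_right, real_inner_smul_right, real_inner_smul_right]
  simp only
  rw [hsplit]
  have hfz : a * L.f z + b * L.f z = L.f z := by linear_combination L.f z * hab
  linarith [mul_le_mul_of_nonneg_left e1 ha, mul_le_mul_of_nonneg_left e2 hb, hfz]

private lemma domConj_convex (L : LegendreFn X) : Convex ℝ L.domConj := by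
  intro y1 h1 y2 h2 a b ha hb hab
  exact (L.domConj_spec _).2 ⟨_, comb_ub L h1 h2 ha hb hab⟩

private lemma conj_convexOn (L : LegendreFn X) : ConvexOn ℝ L.domConj L.conj := by
  refine ⟨domConj_convex L, fun y1 h1 y2 h2 a b ha hb hab => ?_⟩
  have hmem : a • y1 + b • y2 ∈ L.domConj := domConj_convex L h1 h2 ha hb hab
  exact (L.conj_spec _ hmem).2 (comb_ub L h1 h2 ha hb hab)

private lemma biconj (L : LegendreFn X) {x0 : X} (hx0 : x0 ∈ L.dom) {ε : ℝ} (hε : 0 < ε) :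
    ∃ w ∈ L.domConj, L.f x0 - ε < ⟪x0, w⟫_ℝ - L.conj w := by
  have hEc : Convex ℝ {p : X × ℝ | p.1 ∈ L.dom ∧ L.f p.1 ≤ p.2} := L.convexOn.convex_epigraph
  have hpt : (x0, L.f x0 - ε) ∉ {p : X × ℝ | p.1 ∈ L.dom ∧ L.f p.1 ≤ p.2} := by
    rintro ⟨-, hle⟩
    simp only at hle
    linarith
  obtain ⟨ℓ, u, hlt, hgt⟩ := geometric_hahn_banach_closed_point hEc L.closedEpi hpt
  set c : ℝ := ℓ (0, 1) with hc
  have hdecomp : ∀ (z : X) (r : ℝ), ℓ (z, r) = ℓ (z, 0) + r * c := by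
    intro z r
    have hzr : (z, r) = (z, (0:ℝ)) + r • ((0:X), (1:ℝ)) := by
      simp [Prod.ext_iff]
    rw [hzr, map_add, _root_.map_smul, smul_eq_mul]
  have hmemE : ∀ t : ℝ, 0 ≤ t → ℓ (x0, 0) + (L.f x0 + t) * c < u := by
    intro t ht
    have := hlt (x0, L.f x0 + t) ⟨hx0, by simp; linarith⟩
    rwa [hdecomp] at this
  have hcneg : c < 0 := by
    rcases lt_trichotomy c 0 with h | h | h
    · exact h
    · exfalso
      have h1 := hmemE 0 le_rfl
      have h2 := hgt
      rw [hdecomp] at h2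
      rw [h] at h1 h2
      linarith
    · exfalso
      have h1 := hmemE ((u - ℓ (x0, 0) - L.f x0 * c) / c) (by
        rcases le_or_gt (u - ℓ (x0, 0) - L.f x0 * c) 0 with hle | hlt'
        · -- then even t = 0 gives contradiction; but we need nonneg t; handle directly
          exact absurd (hmemE 0 le_rfl) (by nlinarith)
        · positivity)
      have : (L.f x0 + (u - ℓ (x0, 0) - L.f x0 * c) / c) * c
          = L.f x0 * c + (u - ℓ (x0, 0) - L.f x0 * c) := by
        field_simp
      nlinarith
  have hb : (0:ℝ) < -c := neg_pos.2 hcneg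
  set w' : X →L[ℝ] ℝ := ℓ.comp (ContinuousLinearMap.inl ℝ X ℝ) with hw'
  set w : X := (InnerProductSpace.toDual ℝ X).symm ((-c)⁻¹ • w') with hwdef
  have hwz : ∀ z : X, ⟪w, z⟫_ℝ = (-c)⁻¹ * ℓ (z, 0) := by
    intro z
    rw [hwdef, InnerProductSpace.toDual_symm_apply]
    simp [hw']
  have hub : ∀ z ∈ L.dom, ⟪z, w⟫_ℝ - L.f z ≤ (-c)⁻¹ * u := by
    intro z hz
    have h1 := hlt (z, L.f z) ⟨hz, le_rfl⟩
    rw [hdecomp] at h1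
    have step := mul_le_mul_of_nonneg_left h1.le (inv_nonneg.2 hb.le)
    have expand : (-c)⁻¹ * (ℓ (z, 0) + L.f z * c) =
        (-c)⁻¹ * ℓ (z, 0) - ((-c)⁻¹ * (-c)) * L.f z := by ring
    rw [inv_mul_cancel₀ hb.ne'] at expand
    rw [real_inner_comm, hwz]
    linarith [step, expand]
  have hwdom : w ∈ L.domConj := (L.domConj_spec _).2 ⟨_, by rintro r ⟨z, hz, rfl⟩; exact hub z hz⟩
  have hconj : L.conj w ≤ (-c)⁻¹ * u :=
    (L.conj_spec w hwdom).2 (by rintro r ⟨z, hz, rfl⟩; exact hub z hz)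
  refine ⟨w, hwdom, ?_⟩
  have h3 : u < ℓ (x0, 0) + (L.f x0 - ε) * c := by rw [← hdecomp]; exact hgt
  have step := mul_lt_mul_of_pos_left h3 (inv_pos.2 hb)
  have expand : (-c)⁻¹ * (ℓ (x0, 0) + (L.f x0 - ε) * c) =
      (-c)⁻¹ * ℓ (x0, 0) - ((-c)⁻¹ * (-c)) * (L.f x0 - ε) := by ring
  rw [inv_mul_cancel₀ hb.ne'] at expand
  have h4 : (-c)⁻¹ * u < ⟪w, x0⟫_ℝ - (L.f x0 - ε) := by
    rw [hwz]; linarith [step, expand]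
  rw [real_inner_comm] at h4
  linarith

private lemma grad_mem_int_domConj (L : LegendreFn X) {x : X} (hx : x ∈ interior L.dom) :
    L.grad x ∈ interior L.domConj := by
  by_contra hy
  obtain ⟨hydom, hconjy⟩ := grad_mem_domConj L hx
  obtain ⟨ℓ, hℓ⟩ := geometric_hahn_banach_open_point
    ((domConj_convex L).interior) isOpen_interior hy
  set n : X := (InnerProductSpace.toDual ℝ X).symm ℓ with hndef
  have hn : ∀ z : X, ⟪n, z⟫_ℝ = ℓ z := fun z => by
    rw [hndef, InnerProductSpace.toDual_symm_apply]
  have hnne : n ≠ 0 := by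
    obtain ⟨w0, hw0⟩ := L.int_domConj_nonempty
    intro h0
    have h1 := hℓ w0 hw0
    have h2 : ℓ w0 = ⟪n, w0⟫_ℝ := (hn w0).symm
    have h3 : ℓ (L.grad x) = ⟪n, L.grad x⟫_ℝ := (hn _).symm
    rw [h0] at h2 h3
    simp at h2 h3
    rw [h2, h3] at h1
    exact lt_irrefl _ h1
  have hofall : ∀ w ∈ L.domConj, ⟪n, w⟫_ℝ ≤ ⟪n, L.grad x⟫_ℝ := by
    intro w hw
    obtain ⟨w0, hw0⟩ := L.int_domConj_nonempty
    have key : ∀ t : ℝ, 0 < t → t ≤ 1 → ⟪n, w⟫_ℝ + t * ⟪n, w0 - w⟫_ℝ < ⟪n, L.grad x⟫_ℝ := by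
      intro t ht0 ht1
      have hmem := (domConj_convex L).add_smul_sub_mem_interior hw hw0 ⟨ht0, ht1⟩
      have := hℓ _ hmem
      rw [← hn, ← hn] at this
      rwa [inner_add_right, real_inner_smul_right] at this
    exact le_of_forall_small key
  -- a small ball around x inside interior dom
  obtain ⟨ε, hεpos, hball⟩ := Metric.isOpen_iff.1 isOpen_interior x hx
  set δ : ℝ := ε / (2 * (‖n‖ + 1)) with hδdef
  have hδpos : 0 < δ := by positivity
  have hball' : ∀ s : ℝ, 0 ≤ s → s ≤ δ → x + s • n ∈ interior L.dom := by
    intro s hs hsδ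
    apply hball
    rw [Metric.mem_ball, dist_eq_norm]
    have : ‖x + s • n - x‖ = s * ‖n‖ := by
      simp [norm_smul, abs_of_nonneg hs]
    rw [this]
    have h1 : s * ‖n‖ ≤ δ * ‖n‖ := mul_le_mul_of_nonneg_right hsδ (norm_nonneg n)
    have h2 : δ * ‖n‖ < ε := by
      rw [hδdef]
      rw [div_mul_eq_mul_div, div_lt_iff₀ (by positivity : (0:ℝ) < 2 * (‖n‖ + 1))]
      nlinarith [norm_nonneg n, hεpos]
    linarith
  set y : X := L.grad x with hydef
  -- affine upper bound via biconjugation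
  have hup : ∀ s : ℝ, 0 ≤ s → s ≤ δ → L.f (x + s • n) ≤ L.f x + s * ⟪n, y⟫_ℝ := by
    intro s hs hsδ
    by_contra hgt
    push_neg at hgt
    have hε' : 0 < L.f (x + s • n) - (L.f x + s * ⟪n, y⟫_ℝ) := by linarith
    obtain ⟨w, hw, hwgt⟩ := biconj L (interior_subset (hball' s hs hsδ)) hε'
    have hfy : ⟪x, w⟫_ℝ - L.f x ≤ L.conj w := fenchelYoung L hw (interior_subset hx)
    have hsn : ⟪x + s • n, w⟫_ℝ = ⟪x, w⟫_ℝ + s * ⟪n, w⟫_ℝ := by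
      rw [inner_add_left, real_inner_smul_left]
    have hnw : ⟪n, w⟫_ℝ ≤ ⟪n, y⟫_ℝ := hofall w hw
    have := mul_le_mul_of_nonneg_left hnw hs
    rw [hsn] at hwgt
    linarith
  have hlow : ∀ s : ℝ, 0 ≤ s → s ≤ δ → L.f x + s * ⟪n, y⟫_ℝ ≤ L.f (x + s • n) := by
    intro s hs hsδ
    have h := subgrad_of_convexOn L.convexOn (interior_subset hx)
      (interior_subset (hball' s hs hsδ)) (L.hasGrad x hx)
    have : ⟪y, x + s • n - x⟫_ℝ = s * ⟪n, y⟫_ℝ := by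
      rw [add_sub_cancel_left, real_inner_smul_right, real_inner_comm]
    rw [← hydef, this] at h
    linarith
  have heq : ∀ s : ℝ, 0 ≤ s → s ≤ δ → L.f (x + s • n) = L.f x + s * ⟪n, y⟫_ℝ :=
    fun s hs hsδ => le_antisymm (hup s hs hsδ) (hlow s hs hsδ)
  -- strict convexity contradiction on the segment [x, x + δ n]
  have hseg : ∀ z ∈ segment ℝ x (x + δ • n), ∃ s : ℝ, 0 ≤ s ∧ s ≤ δ ∧ z = x + s • n := by
    rintro z ⟨a, b, ha, hb, hab, rfl⟩
    refine ⟨b * δ, by positivity, ?_, ?_⟩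
    · nlinarith [hδpos.le]
    · have : a • x + b • (x + δ • n) = x + (b * δ) • n := by
        rw [smul_add, smul_smul, ← add_assoc, ← add_smul, hab, one_smul]
      rw [this]
  have hSsub : segment ℝ x (x + δ • n) ⊆
      {z ∈ L.dom | ∃ v : X, ∀ w ∈ L.dom, L.f z + ⟪v, w - z⟫_ℝ ≤ L.f w} := by
    intro z hz
    obtain ⟨s, hs, hsδ, rfl⟩ := hseg z hz
    refine ⟨interior_subset (hball' s hs hsδ), y, ?_⟩
    intro w hw
    have hsubx := subgrad_of_convexOn L.convexOn (interior_subset hx) hw (L.hasGrad x hx)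
    rw [← hydef] at hsubx
    have h1 : ⟪y, w - (x + s • n)⟫_ℝ = ⟪y, w - x⟫_ℝ - s * ⟪n, y⟫_ℝ := by
      have : w - (x + s • n) = (w - x) - s • n := by abel
      rw [this, inner_sub_right, real_inner_smul_right, real_inner_comm n y]
    rw [heq s hs hsδ, h1]
    linarith
  have hstrict := L.strict _ hSsub (convex_segment x (x + δ • n))
  have hne : x ≠ x + δ • n := by
    intro h
    apply hnne
    have h2 : δ • n = 0 := by
      have := congrArg (fun z => z - x) h
      simpa using this.symm
    rcases smul_eq_zero.1 h2 with h3 | h3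
    · exact absurd h3 hδpos.ne'
    · exact h3
  have hmid := hstrict.2 (left_mem_segment ℝ x (x + δ • n))
    (right_mem_segment ℝ x (x + δ • n)) hne (by norm_num : (0:ℝ) < 1/2)
    (by norm_num : (0:ℝ) < 1/2) (by norm_num)
  have hmid_pt : (1/2 : ℝ) • x + (1/2 : ℝ) • (x + δ • n) = x + (δ/2) • n := by
    rw [smul_add, smul_smul, ← add_assoc, ← add_smul]
    norm_num
    congr 1
    ring
  rw [hmid_pt] at hmid
  rw [heq (δ/2) (by linarith) (by linarith), heq δ hδpos.le le_rfl] at hmid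
  simp only [smul_eq_mul] at hmid
  linarith

private lemma gradConj_grad (L : LegendreFn X) {x : X} (hx : x ∈ interior L.dom) :
    L.gradConj (L.grad x) = x := by
  obtain ⟨hydom, hconjy⟩ := grad_mem_domConj L hx
  have hyint := grad_mem_int_domConj L hx
  set y := L.grad x with hydef
  have hmin : IsLocalMin (fun w => L.conj w - ⟪x, w⟫_ℝ) y := by
    filter_upwards [isOpen_interior.mem_nhds hyint] with w hw
    have h1 : ⟪x, w⟫_ℝ - L.f x ≤ L.conj w := fenchelYoung L (interior_subset hw) (interior_subset hx)
    show L.conj y - ⟪x, y⟫_ℝ ≤ L.conj w - ⟪x, w⟫_ℝ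
    rw [hconjy]
    linarith
  have hd1 : HasFDerivAt L.conj ((InnerProductSpace.toDual ℝ X) (L.gradConj y)) y :=
    hasGradientAt_iff_hasFDerivAt.1 (L.hasGradConj y hyint)
  have hd2 : HasFDerivAt (fun w => ⟪x, w⟫_ℝ) (innerSL ℝ x) y :=
    (innerSL ℝ x).hasFDerivAt
  have hzero := hmin.hasFDerivAt_eq_zero (hd1.sub hd2)
  apply ext_inner_right ℝ
  intro v
  have := congrArg (fun T => T v) hzero
  simp only [ContinuousLinearMap.sub_apply, ContinuousLinearMap.zero_apply,
    InnerProductSpace.toDual_apply_apply, innerSL_apply_apply] at this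
  linarith [this]

private lemma hess_symm (L : LegendreFn X) {hess : X → X →L[ℝ] X}
    (hhess : ∀ y ∈ interior L.domConj, HasFDerivAt L.gradConj (hess y) y)
    {y : X} (hy : y ∈ interior L.domConj) :
    ∀ u v : X, ⟪hess y u, v⟫_ℝ = ⟪hess y v, u⟫_ℝ := by
  have hev : ∀ᶠ w in 𝓝 y, HasFDerivAt L.conj (innerSL ℝ (L.gradConj w)) w := by
    filter_upwards [isOpen_interior.mem_nhds hy] with w hw
    have := hasGradientAt_iff_hasFDerivAt.1 (L.hasGradConj w hw)
    have heq : innerSL ℝ (L.gradConj w) = (InnerProductSpace.toDual ℝ X) (L.gradConj w) := by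
      ext u; simp
    rw [heq]; exact this
  have hd : HasFDerivAt (fun w => innerSL ℝ (L.gradConj w)) ((innerSL ℝ).comp (hess y)) y :=
    (innerSL ℝ).hasFDerivAt.comp y (hhess y hy)
  have := second_derivative_symmetric_of_eventually hev hd
  intro u v
  have h := this u v
  simpa using h

private lemma hess_psd (L : LegendreFn X) {hess : X → X →L[ℝ] X}
    (hhess : ∀ y ∈ interior L.domConj, HasFDerivAt L.gradConj (hess y) y)
    {y : X} (hy : y ∈ interior L.domConj) :
    ∀ v : X, 0 ≤ ⟪hess y v, v⟫_ℝ := by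
  intro v
  have hmono : ∀ y1 ∈ interior L.domConj, ∀ y2 ∈ interior L.domConj,
      0 ≤ ⟪L.gradConj y1 - L.gradConj y2, y1 - y2⟫_ℝ := by
    intro y1 hy1 y2 hy2
    have h1 := subgrad_of_convexOn (conj_convexOn L) (interior_subset hy1)
      (interior_subset hy2) (L.hasGradConj y1 hy1)
    have h2 := subgrad_of_convexOn (conj_convexOn L) (interior_subset hy2)
      (interior_subset hy1) (L.hasGradConj y2 hy2)
    have hexp : ⟪L.gradConj y1 - L.gradConj y2, y1 - y2⟫_ℝ
        = -⟪L.gradConj y1, y2 - y1⟫_ℝ - ⟪L.gradConj y2, y1 - y2⟫_ℝ := by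
      rw [inner_sub_left]
      have e1 : ⟪L.gradConj y1, y1 - y2⟫_ℝ = -⟪L.gradConj y1, y2 - y1⟫_ℝ := by
        rw [← inner_neg_right]; congr 1; abel
      rw [e1]
    rw [hexp]
    linarith
  -- the derivative of ψ
  have hcurve : HasDerivAt (fun t : ℝ => y + t • v) v 0 := by
    simpa using (hasDerivAt_id (0:ℝ)).smul_const v |>.const_add y
  have hy0 : y + (0:ℝ) • v = y := by simp
  have hgc : HasDerivAt (fun t : ℝ => L.gradConj (y + t • v)) (hess y v) 0 := by
    have hf : HasFDerivAt L.gradConj (hess y) (y + (0:ℝ) • v) := by rw [hy0]; exact hhess y hy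
    simpa [Function.comp_def] using hf.comp_hasDerivAt 0 hcurve
  have hψ : HasDerivAt (fun t : ℝ => ⟪L.gradConj (y + t • v), v⟫_ℝ) ⟪hess y v, v⟫_ℝ 0 := by
    have hclm : HasFDerivAt (fun u : X => ⟪u, v⟫_ℝ) ((innerSL ℝ).flip v)
        (L.gradConj (y + (0:ℝ) • v)) := ((innerSL ℝ).flip v).hasFDerivAt
    have := (hclm.comp_hasDerivAt 0 hgc).congr_deriv (show _ = ⟪hess y v, v⟫_ℝ from rfl)
    simpa [Function.comp_def, ContinuousLinearMap.flip_apply, real_inner_comm] using this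
  have hψ' : HasDerivAt (fun t : ℝ => ⟪L.gradConj (y + t • v) - L.gradConj y, v⟫_ℝ)
      ⟪hess y v, v⟫_ℝ 0 := by
    have heq : (fun t : ℝ => ⟪L.gradConj (y + t • v) - L.gradConj y, v⟫_ℝ)
        = fun t : ℝ => ⟪L.gradConj (y + t • v), v⟫_ℝ - ⟪L.gradConj y, v⟫_ℝ := by
      funext t; rw [inner_sub_left]
    rw [heq]
    simpa using hψ.sub_const (c := ⟪L.gradConj y, v⟫_ℝ)
  have hslope := hasDerivAt_iff_tendsto_slope.1 hψ'
  have hmonoslope : Tendsto (slope (fun t : ℝ => ⟪L.gradConj (y + t • v) - L.gradConj y, v⟫_ℝ) 0)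
      (𝓝[>] 0) (𝓝 ⟪hess y v, v⟫_ℝ) :=
    hslope.mono_left (nhdsWithin_mono _ (fun t ht => ne_of_gt ht))
  refine ge_of_tendsto hmonoslope ?_
  have hcont : Continuous (fun t : ℝ => y + t • v) := by continuity
  have hnb : ∀ᶠ t in 𝓝 (0:ℝ), y + t • v ∈ interior L.domConj := by
    have : (fun t : ℝ => y + t • v) ⁻¹' (interior L.domConj) ∈ 𝓝 (0:ℝ) := by
      apply (isOpen_interior.preimage hcont).mem_nhds
      simpa using hy
    exact this
  filter_upwards [nhdsWithin_le_nhds hnb, self_mem_nhdsWithin] with t hmem ht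
  have hmm := hmono _ hmem _ hy
  have : y + t • v - y = t • v := by abel
  rw [this, real_inner_smul_right] at hmm
  have hinner : 0 ≤ ⟪L.gradConj (y + t • v) - L.gradConj y, v⟫_ℝ := by
    by_contra hneg
    push_neg at hneg
    nlinarith [mem_Ioi.1 ht]
  have ht0 : (0:ℝ) < t := ht
  have hval : slope (fun t : ℝ => ⟪L.gradConj (y + t • v) - L.gradConj y, v⟫_ℝ) 0 t
      = ⟪L.gradConj (y + t • v) - L.gradConj y, v⟫_ℝ / t := by
    rw [slope_def_field]
    simp
  rw [hval]
  exact div_nonneg hinner ht0.le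

private lemma coercive_of_posdef [Nontrivial X] {H : X →L[ℝ] X}
    (hsym : ∀ u v : X, ⟪H u, v⟫_ℝ = ⟪u, H v⟫_ℝ) (hpsd : ∀ v : X, 0 ≤ ⟪H v, v⟫_ℝ)
    (hinj : Function.Injective H) :
    ∃ c : ℝ, 0 < c ∧ ∀ z : X, c * ‖z‖^2 ≤ ⟪H z, z⟫_ℝ := by
  have hcont : Continuous (fun v : X => ⟪H v, v⟫_ℝ) := H.continuous.inner continuous_id
  have hne : (Metric.sphere (0:X) 1).Nonempty := NormedSpace.sphere_nonempty.2 (by norm_num)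
  obtain ⟨v0, hv0, hmin⟩ := (isCompact_sphere (0:X) 1).exists_isMinOn hne hcont.continuousOn
  have hv0n : ‖v0‖ = 1 := by simpa using hv0
  set c : ℝ := ⟪H v0, v0⟫_ℝ with hcdef
  have hcnonneg : 0 ≤ c := hpsd v0
  have hcpos : 0 < c := by
    rcases eq_or_lt_of_le hcnonneg with h | h
    · exfalso
      -- c = 0 forces H v0 = 0
      have hzero : ∀ u : X, ⟪H v0, u⟫_ℝ = 0 := by
        intro u
        have hquad : ∀ t : ℝ, 0 ≤ ⟪H u, u⟫_ℝ * (t * t) + (2 * ⟪H v0, u⟫_ℝ) * t + 0 := by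
          intro t
          have h1 := hpsd (v0 + t • u)
          have h2 : ⟪H (v0 + t • u), v0 + t • u⟫_ℝ
              = ⟪H v0, v0⟫_ℝ + t * ⟪H v0, u⟫_ℝ + t * ⟪H u, v0⟫_ℝ
                + t * t * ⟪H u, u⟫_ℝ := by
            rw [map_add, _root_.map_smul]
            simp only [inner_add_left, inner_add_right, real_inner_smul_left,
              real_inner_smul_right]
            ring
          have h3 : ⟪H u, v0⟫_ℝ = ⟪H v0, u⟫_ℝ := by
            rw [hsym u v0, real_inner_comm]
          rw [h2, h3, ← hcdef, ← h] at h1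
          linarith
        have hd := discrim_le_zero hquad
        unfold discrim at hd
        nlinarith [hd, sq_nonneg ⟪H v0, u⟫_ℝ]
      have hHv0 : H v0 = 0 := by
        have := hzero (H v0)
        exact inner_self_eq_zero.1 this
      have : v0 = 0 := hinj (by rw [hHv0, map_zero])
      rw [this] at hv0n
      simp at hv0n
    · exact h
  refine ⟨c, hcpos, fun z => ?_⟩
  rcases eq_or_ne z 0 with rfl | hz
  · simp
  · have hzn : 0 < ‖z‖ := norm_pos_iff.2 hz
    set v : X := ‖z‖⁻¹ • z with hvdef
    have hvS : v ∈ Metric.sphere (0:X) 1 := by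
      simp [hvdef, norm_smul, abs_of_nonneg (inv_nonneg.2 hzn.le), inv_mul_cancel₀ hzn.ne']
    have hmv := hmin hvS
    have hvv : ⟪H v, v⟫_ℝ = ‖z‖⁻¹ * ‖z‖⁻¹ * ⟪H z, z⟫_ℝ := by
      rw [hvdef, _root_.map_smul, real_inner_smul_left, real_inner_smul_right]
      ring
    have : c ≤ ‖z‖⁻¹ * ‖z‖⁻¹ * ⟪H z, z⟫_ℝ := by
      rw [← hvv]; exact hmv
    have hmul := mul_le_mul_of_nonneg_left this (by positivity : (0:ℝ) ≤ ‖z‖^2)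
    calc c * ‖z‖^2 = ‖z‖^2 * c := by ring
      _ ≤ ‖z‖^2 * (‖z‖⁻¹ * ‖z‖⁻¹ * ⟪H z, z⟫_ℝ) := hmul
      _ = (‖z‖ * ‖z‖⁻¹) * (‖z‖ * ‖z‖⁻¹) * ⟪H z, z⟫_ℝ := by ring
      _ = ⟪H z, z⟫_ℝ := by rw [mul_inv_cancel₀ hzn.ne']; ring

private lemma finite_mp_bound {I : Type*} [Finite I] {Yf : I → Type*}
    [∀ i, NormedAddCommGroup (Yf i)] [∀ i, InnerProductSpace ℝ (Yf i)]
    [∀ i, FiniteDimensional ℝ (Yf i)]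
    (A : ∀ i, X →L[ℝ] Yf i) (T : ∀ i, Yf i →L[ℝ] Yf i) :
    ∃ M : ℝ, ∀ (i : I) (G : Yf i →L[ℝ] Yf i), IsMPInv (T i) G →
      ‖ContinuousLinearMap.adjoint (A i) ∘L G ∘L A i‖ ≤ M := by
  classical
  set vals : I → ℝ := fun i =>
    if h : ∃ G : Yf i →L[ℝ] Yf i, IsMPInv (T i) G then
      ‖ContinuousLinearMap.adjoint (A i) ∘L h.choose ∘L A i‖ else 0 with hvals
  obtain ⟨M, hM⟩ := (Set.finite_range vals).bddAbove
  refine ⟨M, fun i G hG => ?_⟩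
  have hex : ∃ G' : Yf i →L[ℝ] Yf i, IsMPInv (T i) G' := ⟨G, hG⟩
  have hGeq : G = hex.choose := mp_unique hG hex.choose_spec
  have hval : vals i = ‖ContinuousLinearMap.adjoint (A i) ∘L hex.choose ∘L A i‖ := by
    rw [hvals]; exact dif_pos hex
  rw [hGeq, ← hval]
  exact hM (Set.mem_range_self i)

private lemma isLUB_smul {S : Set ℝ} {b k : ℝ} (hk : 0 < k) (h : IsLUB S b) :
    IsLUB ((fun r => k * r) '' S) (k * b) := by
  constructor
  · rintro r ⟨s, hs, rfl⟩
    exact mul_le_mul_of_nonneg_left (h.1 hs) hk.le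
  · intro u hu
    have : b ≤ k⁻¹ * u := by
      apply h.2
      intro s hs
      have := hu ⟨s, hs, rfl⟩
      rw [le_inv_mul_iff₀ hk]
      exact this
    calc k * b ≤ k * (k⁻¹ * u) := mul_le_mul_of_nonneg_left this hk.le
      _ = u := by field_simp

private lemma hess_grad_eigen (L : LegendreFn X) {hess : X → X →L[ℝ] X}
    (hhess : ∀ y ∈ interior L.domConj, HasFDerivAt L.gradConj (hess y) y)
    {p : ℝ} (hp1 : 1 < p) (hdom : L.dom = Set.univ)
    (hfh : ∀ t : ℝ, 0 < t → ∀ z : X, L.f (t • z) = t ^ p * L.f z)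
    (x : X) :
    hess (L.grad x) (L.grad x) = (p / (p - 1) - 1) • x := by
  have hxint : x ∈ interior L.dom := by rw [hdom, interior_univ]; trivial
  have hyint := grad_mem_int_domConj L hxint
  have hgcx := gradConj_grad L hxint
  set y := L.grad x with hydef
  have hp0 : (0:ℝ) < p - 1 := by linarith
  set q : ℝ := p / (p - 1) with hqdef
  have hscale : ∀ s : ℝ, 0 < s → ∀ w ∈ L.domConj,
      s • w ∈ L.domConj ∧ L.conj (s • w) = s ^ q * L.conj w := by
    intro s hs w hw
    set σ : ℝ := s ^ (p - 1)⁻¹ with hσdef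
    have hσpos : 0 < σ := Real.rpow_pos_of_pos hs _
    have hσs : σ * s = s ^ q := by
      rw [hσdef]
      calc s ^ (p-1)⁻¹ * s = s ^ (p-1)⁻¹ * s ^ (1:ℝ) := by rw [Real.rpow_one]
        _ = s ^ ((p-1)⁻¹ + 1) := (Real.rpow_add hs _ _).symm
        _ = s ^ q := by rw [hqdef]; congr 1; field_simp; ring
    have hσp : σ ^ p = s ^ q := by
      rw [hσdef, ← Real.rpow_mul hs.le, hqdef]
      congr 1
      field_simp
    have hσp' : σ ^ p = σ * s := hσp.trans hσs.symm
    have hcomp : ∀ u : X, ⟪σ • u, s • w⟫_ℝ - L.f (σ • u) = s ^ q * (⟪u, w⟫_ℝ - L.f u) := by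
      intro u
      rw [real_inner_smul_left, real_inner_smul_right, hfh σ hσpos u, ← hσs, hσp']
      ring
    have hSeq : ((fun z => ⟪z, s • w⟫_ℝ - L.f z) '' L.dom)
        = (fun r => s ^ q * r) '' ((fun z => ⟪z, w⟫_ℝ - L.f z) '' L.dom) := by
      rw [hdom]
      ext r
      simp only [Set.image_univ, Set.mem_range, Set.mem_image, Set.image_image]
      constructor
      · rintro ⟨z, rfl⟩
        refine ⟨⟪σ⁻¹ • z, w⟫_ℝ - L.f (σ⁻¹ • z), ⟨σ⁻¹ • z, rfl⟩, ?_⟩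
        have hz : σ • (σ⁻¹ • z) = z := by
          rw [smul_smul, mul_inv_cancel₀ hσpos.ne', one_smul]
        rw [← hcomp (σ⁻¹ • z), hz]
      · rintro ⟨r', ⟨v', rfl⟩, rfl⟩
        exact ⟨σ • v', hcomp v'⟩
    have hlub := isLUB_smul (Real.rpow_pos_of_pos hs q) (L.conj_spec w hw)
    rw [← hSeq] at hlub
    have hmem : s • w ∈ L.domConj := (L.domConj_spec _).2 ⟨_, hlub.1⟩
    exact ⟨hmem, (L.conj_spec _ hmem).unique hlub⟩
  have hgscale : ∀ s : ℝ, 0 < s → ∀ y' ∈ interior L.domConj,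
      s • y' ∈ interior L.domConj ∧ L.gradConj (s • y') = (s ^ (q - 1)) • L.gradConj y' := by
    intro s hs y' hy'
    have hmem : s • y' ∈ interior L.domConj := by
      have hopen : IsOpen (s • interior L.domConj) := isOpen_interior.smul₀ hs.ne'
      have hsub2 : (s • interior L.domConj : Set X) ⊆ L.domConj := by
        rintro _ ⟨w, hw, rfl⟩; exact (hscale s hs w (interior_subset hw)).1
      exact interior_maximal hsub2 hopen (Set.smul_mem_smul_set hy')
    refine ⟨hmem, ?_⟩
    have h1 : HasFDerivAt (fun w => L.conj (s • w))
        ((InnerProductSpace.toDual ℝ X) (s • L.gradConj (s • y'))) y' := by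
      have hc := hasGradientAt_iff_hasFDerivAt.1 (L.hasGradConj _ hmem)
      have hsm : HasFDerivAt (fun w : X => s • w) (s • (ContinuousLinearMap.id ℝ X)) y' :=
        ((s • (ContinuousLinearMap.id ℝ X)) : X →L[ℝ] X).hasFDerivAt
      have hcmp := hc.comp y' hsm
      have heqf : (InnerProductSpace.toDual ℝ X) (s • L.gradConj (s • y'))
          = ((InnerProductSpace.toDual ℝ X) (L.gradConj (s • y'))).comp
            (s • (ContinuousLinearMap.id ℝ X)) := by
        ext v
        simp [InnerProductSpace.toDual_apply_apply, real_inner_smul_left, real_inner_smul_right]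
      rw [heqf]
      exact hcmp
    have h2 : HasFDerivAt (fun w => s ^ q * L.conj w)
        ((InnerProductSpace.toDual ℝ X) ((s ^ q) • L.gradConj y')) y' := by
      have hc := hasGradientAt_iff_hasFDerivAt.1 (L.hasGradConj _ hy')
      have hcm := hc.const_mul (s ^ q)
      have heqf : (InnerProductSpace.toDual ℝ X) ((s ^ q) • L.gradConj y')
          = (s ^ q) • (InnerProductSpace.toDual ℝ X) (L.gradConj y') := by
        rw [_root_.map_smul]
      rw [heqf]
      exact hcm
    have hee : (fun w => L.conj (s • w)) =ᶠ[𝓝 y'] (fun w => s ^ q * L.conj w) := by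
      filter_upwards [isOpen_interior.mem_nhds hy'] with w hw
      exact (hscale s hs w (interior_subset hw)).2
    have h1' : HasFDerivAt (fun w => s ^ q * L.conj w)
        ((InnerProductSpace.toDual ℝ X) (s • L.gradConj (s • y'))) y' :=
      (Filter.EventuallyEq.hasFDerivAt_iff hee).1 h1
    have huniq := h1'.unique h2
    have hinj : s • L.gradConj (s • y') = (s ^ q) • L.gradConj y' :=
      (InnerProductSpace.toDual ℝ X).injective huniq
    have hsolve : L.gradConj (s • y') = (s⁻¹ * s ^ q) • L.gradConj y' := by
      rw [← smul_smul]
      rw [← hinj, smul_smul, inv_mul_cancel₀ hs.ne', one_smul]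
    rw [hsolve]
    congr 1
    rw [Real.rpow_sub hs, Real.rpow_one]
    field_simp
  have hcurve : HasDerivAt (fun s : ℝ => s • y) y 1 := by
    simpa using (hasDerivAt_id (1:ℝ)).smul_const y
  have hd1 : HasDerivAt (fun s : ℝ => L.gradConj (s • y)) (hess y y) 1 := by
    have hf : HasFDerivAt L.gradConj (hess y) ((1:ℝ) • y) := by
      rw [one_smul]; exact hhess y hyint
    simpa [Function.comp_def] using hf.comp_hasDerivAt 1 hcurve
  have hd2 : HasDerivAt (fun s : ℝ => s ^ (q-1) • x) ((q - 1) • x) 1 := by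
    have := (Real.hasDerivAt_rpow_const (p := q - 1) (x := 1) (Or.inl one_ne_zero)).smul_const x
    simpa [Real.one_rpow] using this
  have hee2 : (fun s : ℝ => L.gradConj (s • y)) =ᶠ[𝓝 (1:ℝ)] (fun s => s ^ (q-1) • x) := by
    filter_upwards [isOpen_Ioi.mem_nhds (by norm_num : (1:ℝ) ∈ Ioi 0)] with s hs
    rw [(hgscale s hs y hyint).2, hgcx]
  have hd1' : HasDerivAt (fun s : ℝ => s ^ (q-1) • x) (hess y y) 1 :=
    (Filter.EventuallyEq.hasDerivAt_iff hee2).1 hd1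
  exact hd1'.unique hd2

end AuxLegendre

/-- Sufficient conditions for H2₁ (and, in the stochastic setting, H2₂):
(a) invertibility of `∇²φ*(∇φ(x))` on `int (dom φ) ∩ C`; (b) `φ` twice differentiable on
`int (dom φ)`; (c) `I` finite with `A ∘ ∇²φ*(∇φ(x)) ≠ 0` on `int (dom φ) ∩ C`;
(d) `I` finite, `X = ℝⁿ`, `0 ∉ C`, and `φ = (1/p)‖·‖_p^p` with `p ∈ (1,2)`. -/
theorem stmt_19 {X Y : Type*} [NormedAddCommGroup X] [InnerProductSpace ℝ X]
    [FiniteDimensional ℝ X] [NormedAddCommGroup Y] [InnerProductSpace ℝ Y]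
    [FiniteDimensional ℝ Y]
    {I : Type*} [MeasurableSpace I] {Yf : I → Type*} [∀ i, NormedAddCommGroup (Yf i)]
    [∀ i, InnerProductSpace ℝ (Yf i)] [∀ i, FiniteDimensional ℝ (Yf i)]
    {Ω : Type*} [MeasurableSpace Ω] (P : Measure Ω) [IsProbabilityMeasure P]
    (ξ : Ω → I) (hξ : Measurable ξ)
    (L : LegendreFn X)
    -- H1
    (A : ∀ i, X →L[ℝ] Yf i) (b : ∀ i, Yf i) (hAne : ∀ i, A i ≠ 0)
    (Cs : I → Set X) (hCs : ∀ i, Cs i = {x | A i x = b i})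
    (AY : X →L[ℝ] Y) (bY : Y) (C : Set X) (hCaff : C = {x | AY x = bY})
    (hCuniv : C ≠ Set.univ)
    -- φ* is twice differentiable, with second derivative `hess`
    (hess : X → X →L[ℝ] X)
    (hhess : ∀ y ∈ interior L.domConj, HasFDerivAt L.gradConj (hess y) y)
    -- one of the four sufficient conditions
    (hcases :
      (∀ x ∈ interior L.dom ∩ C, Function.Bijective ⇑(hess (L.grad x))) ∨
      (∃ hess₂ : X → X →L[ℝ] X, ∀ x ∈ interior L.dom, HasFDerivAt L.grad (hess₂ x) x) ∨
      (Finite I ∧ ∀ x ∈ interior L.dom ∩ C, AY ∘L hess (L.grad x) ≠ 0) ∨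
      (Finite I ∧ (0 : X) ∉ C ∧
        ∃ (n : ℕ) (p : ℝ) (e : X ≃ₗᵢ[ℝ] EuclideanSpace ℝ (Fin n)),
          p ∈ Set.Ioo (1 : ℝ) 2 ∧ L.dom = Set.univ ∧
            ∀ z : X, L.f z = (1 / p) * ∑ j, |e z j| ^ p)) :
    H21 L A AY C hess ∧ H22 L A AY C hess P ξ := by
  classical
  have master : ∀ x ∈ interior L.dom ∩ C,
      (AY ∘L hess (L.grad x) ≠ 0) ∧
      ∃ M : ℝ, ∀ (i : I) (G : Yf i →L[ℝ] Yf i),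
        IsMPInv (A i ∘L hess (L.grad x) ∘L ContinuousLinearMap.adjoint (A i)) G →
        ‖ContinuousLinearMap.adjoint (A i) ∘L G ∘L A i‖ ≤ M := by
    intro x hx
    obtain ⟨hxint, hxC⟩ := hx
    have hAYx : AY x = bY := by rw [hCaff] at hxC; exact hxC
    have hAYne : AY ≠ 0 := by
      intro h0
      apply hCuniv
      have hbY : bY = 0 := by rw [h0] at hAYx; simpa using hAYx.symm
      rw [hCaff, h0, hbY]
      ext z; simp
    have hXnt : Nontrivial X := by
      by_contra hnt
      have hsub : Subsingleton X := not_nontrivial_iff_subsingleton.1 hnt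
      apply hCuniv
      apply Set.eq_univ_of_forall
      intro z
      have hzx : z = x := Subsingleton.elim z x
      rw [hzx]; exact hxC
    have hyint : L.grad x ∈ interior L.domConj := grad_mem_int_domConj L hxint
    -- the shared core for invertible Hessian
    have core : Function.Bijective ⇑(hess (L.grad x)) →
        (AY ∘L hess (L.grad x) ≠ 0) ∧
        ∃ M : ℝ, ∀ (i : I) (G : Yf i →L[ℝ] Yf i),
          IsMPInv (A i ∘L hess (L.grad x) ∘L ContinuousLinearMap.adjoint (A i)) G →
          ‖ContinuousLinearMap.adjoint (A i) ∘L G ∘L A i‖ ≤ M := by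
      intro hbij
      have hsymm0 := hess_symm L hhess hyint
      have hsym' : ∀ u v : X, ⟪hess (L.grad x) u, v⟫_ℝ = ⟪u, hess (L.grad x) v⟫_ℝ := by
        intro u v
        rw [hsymm0 u v]
        exact (real_inner_comm _ _).symm
      have hpsd := hess_psd L hhess hyint
      obtain ⟨c, hc, hcoer⟩ := coercive_of_posdef hsym' hpsd hbij.injective
      constructor
      · intro h0
        obtain ⟨u, hu⟩ : ∃ u : X, AY u ≠ 0 := by
          by_contra hall
          push_neg at hall
          exact hAYne (by ext z; simp [hall z])
        obtain ⟨z, hz⟩ := hbij.surjective u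
        have := DFunLike.congr_fun h0 z
        simp only [ContinuousLinearMap.comp_apply, ContinuousLinearMap.zero_apply] at this
        rw [hz] at this
        exact hu this
      · exact ⟨1/c, fun i G hG => core_bound hsym' hc hcoer (A i) hG⟩
    rcases hcases with hA | hB | hC' | hD
    · exact core (hA x ⟨hxint, hxC⟩)
    · -- twice differentiable φ
      obtain ⟨hess₂, hh2⟩ := hB
      apply core
      have hid : (L.gradConj ∘ L.grad) =ᶠ[𝓝 x] (id : X → X) := by
        filter_upwards [isOpen_interior.mem_nhds hxint] with z hz
        exact gradConj_grad L hz
      have hcomp : HasFDerivAt (L.gradConj ∘ L.grad) (hess (L.grad x) ∘L hess₂ x) x :=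
        (hhess _ hyint).comp x (hh2 x hxint)
      have hidd : HasFDerivAt (id : X → X) (hess (L.grad x) ∘L hess₂ x) x :=
        (Filter.EventuallyEq.hasFDerivAt_iff hid).1 hcomp
      have hone : hess (L.grad x) ∘L hess₂ x = ContinuousLinearMap.id ℝ X :=
        hidd.unique (hasFDerivAt_id x)
      have hsurj : Function.Surjective ⇑(hess (L.grad x)) := by
        intro v
        refine ⟨hess₂ x v, ?_⟩
        have := DFunLike.congr_fun hone v
        simpa using this
      have hinj : Function.Injective ⇑(hess (L.grad x)) := by
        have h := (LinearMap.injective_iff_surjective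
          (f := ((hess (L.grad x)) : X →ₗ[ℝ] X))).2 (by simpa using hsurj)
        simpa using h
      exact ⟨hinj, hsurj⟩
    · -- finite I, explicit nonvanishing
      obtain ⟨hfin, hne0⟩ := hC'
      refine ⟨hne0 x ⟨hxint, hxC⟩, ?_⟩
      exact finite_mp_bound A
        (fun i => A i ∘L hess (L.grad x) ∘L ContinuousLinearMap.adjoint (A i))
    · -- finite I, p-norm
      obtain ⟨hfin, h0C, n, p, e, hp, hdomuniv, hf⟩ := hD
      constructor
      · intro h0
        have hfh : ∀ t : ℝ, 0 < t → ∀ z : X, L.f (t • z) = t ^ p * L.f z := by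
          intro t ht z
          rw [hf, hf]
          have hsm : ∀ j, e (t • z) j = t * e z j := by
            intro j
            rw [_root_.map_smul]
            rfl
          have hterm : ∀ j, |e (t • z) j| ^ p = t ^ p * |e z j| ^ p := by
            intro j
            rw [hsm j, abs_mul, abs_of_pos ht, Real.mul_rpow ht.le (abs_nonneg _)]
          rw [Finset.sum_congr rfl (fun j _ => hterm j), ← Finset.mul_sum]
          ring
        have heig := hess_grad_eigen L hhess hp.1 hdomuniv hfh x
        have happ := DFunLike.congr_fun h0 (L.grad x)
        simp only [ContinuousLinearMap.comp_apply, ContinuousLinearMap.zero_apply] at happ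
        rw [heig, _root_.map_smul] at happ
        have hqne : p / (p - 1) - 1 ≠ 0 := by
          obtain ⟨hp1, hp2⟩ := hp
          have hp0 : (0:ℝ) < p - 1 := by linarith
          have : p / (p - 1) - 1 = 1 / (p - 1) := by field_simp; ring
          rw [this]
          positivity
        have hAYx0 : AY x = 0 := by
          rcases smul_eq_zero.1 happ with h | h
          · exact absurd h hqne
          · exact h
        apply h0C
        rw [hCaff]
        show AY 0 = bY
        rw [map_zero, ← hAYx, hAYx0]
      · exact finite_mp_bound A
          (fun i => A i ∘L hess (L.grad x) ∘L ContinuousLinearMap.adjoint (A i))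
  refine ⟨⟨hhess, fun x hx => master x hx⟩, hhess, fun x hx => ?_⟩
  obtain ⟨h1, M, hM⟩ := master x hx
  exact ⟨h1, M, Filter.Eventually.of_forall fun ω G hG => hM (ξ ω) G hG⟩
end
end
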